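/- arXiv:1201.5875 — 2 statements merged into one kernel-verified Lean document; each statement's English description precedes it below -/
import Mathlib

section
/- Let W be a domain in a complex manifold X covered by analytic discs with boundaries in W, let φ : W → [-∞,∞) be upper semicontinuous and bounded above by m ∈ ℝ, and for each real n ≥ m let φₙ : X → [-∞,∞) equal φ on W and n on X \ W. Then the largest plurisubharmonic minorant Pφₙ of φₙ on X equals Sφ, the largest plurisubharmonic subextension of φ to X, for every n ≥ m. -/
open Metric MeasureTheory Set Classical
open scoped ENNReal Real Topology

noncomputable def erealToENNReal (x : EReal) : ENNReal :=
  if x = ⊤ then ⊤ else ENNReal.ofReal x.toReal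

/-- Average of an `EReal`-valued function over the unit circle (parametrised by angle),
with respect to normalised arc length. -/
noncomputable def circAvg (g : ℝ → EReal) : EReal :=
  (((∫⁻ t in Set.Ioc (0:ℝ) (2*Real.pi), erealToENNReal (g t)) / ENNReal.ofReal (2*Real.pi) : ℝ≥0∞) : EReal) -
  (((∫⁻ t in Set.Ioc (0:ℝ) (2*Real.pi), erealToENNReal (-(g t))) / ENNReal.ofReal (2*Real.pi) : ℝ≥0∞) : EReal)

variable {E : Type*} [NormedAddCommGroup E] [NormedSpace ℂ E]

/-- An analytic disc: continuous on the closed unit disc, holomorphic on the open unit disc. -/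
def IsDisc (f : ℂ → E) : Prop :=
  ContinuousOn f (closedBall 0 1) ∧ DifferentiableOn ℂ f (ball 0 1)

/-- An analytic disc with image in the set `X`. -/
def IsDiscIn (f : ℂ → E) (X : Set E) : Prop :=
  IsDisc f ∧ MapsTo f (closedBall 0 1) X

/-- Boundary average `∫_𝕋 φ ∘ f dλ` of `φ` over the boundary of the disc `f`. -/
noncomputable def bAvg (φ : E → EReal) (f : ℂ → E) : EReal :=
  circAvg fun t => φ (f (Complex.exp (t * Complex.I)))

/-- Plurisubharmonicity on a set: upper semicontinuity, values in `[-∞,∞)`, and the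
sub-mean-value inequality over the boundary circle of every affine complex disc in the set. -/
def PSHOn (u : E → EReal) (U : Set E) : Prop :=
  UpperSemicontinuousOn u U ∧ (∀ x ∈ U, u x ≠ ⊤) ∧
  ∀ a b : E, (∀ z ∈ closedBall (0:ℂ) 1, a + z • b ∈ U) →
    u a ≤ circAvg fun t => u (a + Complex.exp (t * Complex.I) • b)

/-- `Sφ`: the pointwise supremum of all plurisubharmonic `u` on `X` with `u ≤ φ` on `W`. -/
noncomputable def subSup (φ : E → EReal) (W X : Set E) : E → EReal :=
  fun x => ⨆ u : {u : E → EReal // PSHOn u X ∧ ∀ w ∈ W, u w ≤ φ w}, u.1 x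

/-- A domain: a connected nonempty open set. -/
def IsDomain' (W : Set E) : Prop := IsOpen W ∧ IsConnected W

open scoped Manifold

/-- An analytic disc in a complex manifold `X` modelled on `E`: continuous on the closed
unit disc and holomorphic on the open unit disc. -/
def IsDiscM (E : Type*) [NormedAddCommGroup E] [NormedSpace ℂ E]
    {X : Type*} [TopologicalSpace X] [ChartedSpace E X] (f : ℂ → X) : Prop :=
  ContinuousOn f (closedBall 0 1) ∧ MDifferentiableOn 𝓘(ℂ, ℂ) 𝓘(ℂ, E) f (ball 0 1)

/-- Plurisubharmonicity on a subset of a complex manifold, via upper semicontinuity,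
values in `[-∞,∞)`, and the sub-mean-value inequality over all analytic discs in the set. -/
def PSHOnM (E : Type*) [NormedAddCommGroup E] [NormedSpace ℂ E]
    {X : Type*} [TopologicalSpace X] [ChartedSpace E X] (u : X → EReal) (S : Set X) : Prop :=
  UpperSemicontinuousOn u S ∧ (∀ x ∈ S, u x ≠ ⊤) ∧
  ∀ f : ℂ → X, IsDiscM E f → MapsTo f (closedBall 0 1) S →
    u (f 0) ≤ circAvg fun t => u (f (Complex.exp (t * Complex.I)))

private noncomputable def mob (a w : ℂ) : ℂ := (w + a) / (1 + (starRingEnd ℂ) a * w)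

lemma mob_normSq (a w : ℂ) :
    Complex.normSq (1 + (starRingEnd ℂ) a * w) - Complex.normSq (w + a)
      = (1 - Complex.normSq a) * (1 - Complex.normSq w) := by
  have : (1 + (starRingEnd ℂ) a * w) * (starRingEnd ℂ) (1 + (starRingEnd ℂ) a * w)
      - (w + a) * (starRingEnd ℂ) (w + a)
    = (1 - a * (starRingEnd ℂ) a) * (1 - w * (starRingEnd ℂ) w) := by
    simp only [map_add, map_mul, map_one, Complex.conj_conj]; ring
  rw [Complex.mul_conj, Complex.mul_conj, Complex.mul_conj, Complex.mul_conj] at this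
  exact_mod_cast this

lemma mob_denom_ne (a w : ℂ) (ha : ‖a‖ < 1) (hw : ‖w‖ ≤ 1) :
    1 + (starRingEnd ℂ) a * w ≠ 0 := by
  intro h
  have h1 : (starRingEnd ℂ) a * w = -1 := by linear_combination h
  have : ‖(starRingEnd ℂ) a * w‖ < 1 := by
    rw [norm_mul, RCLike.norm_conj]
    calc ‖a‖ * ‖w‖ ≤ ‖a‖ * 1 := by
          exact mul_le_mul_of_nonneg_left hw (norm_nonneg a)
      _ < 1 := by simpa using ha
  rw [h1] at this; simp at this

lemma mob_norm_le (a w : ℂ) (ha : ‖a‖ < 1) (hw : ‖w‖ ≤ 1) : ‖mob a w‖ ≤ 1 := by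
  have hna : Complex.normSq a < 1 := by
    rw [← Complex.sq_norm]
    nlinarith [norm_nonneg a]
  have hnw : Complex.normSq w ≤ 1 := by
    rw [← Complex.sq_norm]
    nlinarith [norm_nonneg w]
  have key := mob_normSq a w
  have hle : Complex.normSq (w + a) ≤ Complex.normSq (1 + (starRingEnd ℂ) a * w) := by
    nlinarith
  rw [mob, norm_div]
  have hd : 0 < ‖1 + (starRingEnd ℂ) a * w‖ :=
    norm_pos_iff.mpr (mob_denom_ne a w ha hw)
  rw [div_le_one hd]
  have : ‖w + a‖ ^ 2 ≤ ‖1 + (starRingEnd ℂ) a * w‖ ^ 2 := by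
    rw [Complex.sq_norm, Complex.sq_norm]; exact hle
  nlinarith [norm_nonneg (w + a), hd]

lemma mob_norm_lt (a w : ℂ) (ha : ‖a‖ < 1) (hw : ‖w‖ < 1) : ‖mob a w‖ < 1 := by
  have hna : Complex.normSq a < 1 := by
    rw [← Complex.sq_norm]
    nlinarith [norm_nonneg a]
  have hnw : Complex.normSq w < 1 := by
    rw [← Complex.sq_norm]
    nlinarith [norm_nonneg w]
  have key := mob_normSq a w
  have hle : Complex.normSq (w + a) < Complex.normSq (1 + (starRingEnd ℂ) a * w) := by
    nlinarith
  rw [mob, norm_div]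
  have hd : 0 < ‖1 + (starRingEnd ℂ) a * w‖ :=
    norm_pos_iff.mpr (mob_denom_ne a w ha hw.le)
  rw [div_lt_one hd]
  have : ‖w + a‖ ^ 2 < ‖1 + (starRingEnd ℂ) a * w‖ ^ 2 := by
    rw [Complex.sq_norm, Complex.sq_norm]; exact hle
  nlinarith [norm_nonneg (w + a), hd]

lemma mob_norm_eq (a w : ℂ) (ha : ‖a‖ < 1) (hw : ‖w‖ = 1) : ‖mob a w‖ = 1 := by
  have hnw : Complex.normSq w = 1 := by
    rw [← Complex.sq_norm, hw]; norm_num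
  have key := mob_normSq a w
  have heq : Complex.normSq (w + a) = Complex.normSq (1 + (starRingEnd ℂ) a * w) := by
    rw [hnw] at key; linarith [key]
  have hd : 0 < ‖1 + (starRingEnd ℂ) a * w‖ :=
    norm_pos_iff.mpr (mob_denom_ne a w ha hw.le)
  rw [mob, norm_div]
  rw [Complex.norm_def, Complex.norm_def, heq]
  rw [div_self]
  intro h0
  rw [Complex.norm_def] at hd
  rw [h0] at hd
  exact lt_irrefl 0 hd

lemma mob_zero (a : ℂ) : mob a 0 = a := by simp [mob]

lemma mob_diffOn (a : ℂ) (ha : ‖a‖ < 1) : DifferentiableOn ℂ (mob a) (closedBall 0 1) := by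
  apply DifferentiableOn.div
  · exact (differentiable_id.add_const a).differentiableOn
  · exact ((differentiable_const _).mul differentiable_id).const_add 1 |>.differentiableOn
  · intro w hw
    exact mob_denom_ne a w ha (by simpa [mem_closedBall, dist_eq_norm] using hw)

lemma erealToENNReal_le {x y : EReal} (h : x ≤ y) : erealToENNReal x ≤ erealToENNReal y := by
  unfold erealToENNReal
  rcases eq_or_ne y ⊤ with hy | hy
  · simp [hy]
  · have hx : x ≠ ⊤ := fun hx => hy (top_le_iff.mp (hx ▸ h))
    rw [if_neg hx, if_neg hy]
    rcases eq_or_ne x ⊥ with hb | hb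
    · simp [hb, EReal.toReal_bot, ENNReal.ofReal_zero]
    · exact ENNReal.ofReal_le_ofReal (EReal.toReal_le_toReal h hb hy)

lemma erealToENNReal_coe (r : ℝ) : erealToENNReal (r : EReal) = ENNReal.ofReal r := by
  unfold erealToENNReal
  rw [if_neg (EReal.coe_ne_top r), EReal.toReal_coe]

lemma circAvg_le_const {g : ℝ → EReal} {c : ℝ} (h : ∀ t, g t ≤ (c : EReal)) :
    circAvg g ≤ (c : EReal) := by
  have h2π : (0:ℝ) < 2 * Real.pi := by positivity
  have hμ0 : ENNReal.ofReal (2 * Real.pi) ≠ 0 := by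
    exact (ENNReal.ofReal_pos.mpr h2π).ne'
  have hμt : ENNReal.ofReal (2 * Real.pi) ≠ ⊤ := ENNReal.ofReal_ne_top
  have hvol : volume (Set.Ioc (0:ℝ) (2*Real.pi)) = ENNReal.ofReal (2*Real.pi) := by
    rw [Real.volume_Ioc]; norm_num
  have hA : (∫⁻ t in Set.Ioc (0:ℝ) (2*Real.pi), erealToENNReal (g t)) / ENNReal.ofReal (2*Real.pi)
      ≤ ENNReal.ofReal c := by
    have h1 : (∫⁻ t in Set.Ioc (0:ℝ) (2*Real.pi), erealToENNReal (g t))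
        ≤ ∫⁻ _ in Set.Ioc (0:ℝ) (2*Real.pi), ENNReal.ofReal c := by
      refine lintegral_mono fun t => ?_
      rw [← erealToENNReal_coe]; exact erealToENNReal_le (h t)
    rw [setLIntegral_const, hvol] at h1
    calc _ ≤ (ENNReal.ofReal c * ENNReal.ofReal (2*Real.pi)) / ENNReal.ofReal (2*Real.pi) :=
          ENNReal.div_le_div_right h1 _
      _ = ENNReal.ofReal c := by
          rw [mul_div_assoc, ENNReal.div_self hμ0 hμt, mul_one]
  have hB : ENNReal.ofReal (-c)
      ≤ (∫⁻ t in Set.Ioc (0:ℝ) (2*Real.pi), erealToENNReal (-(g t))) / ENNReal.ofReal (2*Real.pi) := by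
    have h1 : (∫⁻ _ in Set.Ioc (0:ℝ) (2*Real.pi), ENNReal.ofReal (-c))
        ≤ ∫⁻ t in Set.Ioc (0:ℝ) (2*Real.pi), erealToENNReal (-(g t)) := by
      refine lintegral_mono fun t => ?_
      rw [← erealToENNReal_coe]
      refine erealToENNReal_le ?_
      rw [show ((-c : ℝ) : EReal) = -(c : EReal) by exact_mod_cast EReal.coe_neg c]
      exact EReal.neg_le_neg_iff.mpr (h t)
    rw [setLIntegral_const, hvol] at h1
    calc ENNReal.ofReal (-c)
        = (ENNReal.ofReal (-c) * ENNReal.ofReal (2*Real.pi)) / ENNReal.ofReal (2*Real.pi) :=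
          by rw [mul_div_assoc, ENNReal.div_self hμ0 hμt, mul_one]
      _ ≤ _ := ENNReal.div_le_div_right h1 _
  calc circAvg g
      ≤ ((ENNReal.ofReal c : ℝ≥0∞) : EReal) - ((ENNReal.ofReal (-c) : ℝ≥0∞) : EReal) := by
        refine EReal.sub_le_sub ?_ ?_
        · exact_mod_cast hA
        · exact_mod_cast hB
    _ = (c : EReal) := by
        rw [EReal.coe_ennreal_ofReal, EReal.coe_ennreal_ofReal]
        rw [show ((max c 0 : ℝ) : EReal) - ((max (-c) 0 : ℝ) : EReal)
            = ((max c 0 - max (-c) 0 : ℝ) : EReal) from (EReal.coe_sub _ _).symm]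
        congr 1
        rcases le_total 0 c with hc | hc
        · rw [max_eq_left hc, max_eq_right (by linarith)]; ring
        · rw [max_eq_right hc, max_eq_left (by linarith)]; ring

private lemma psh_le_on_disc {E : Type*} [NormedAddCommGroup E] [NormedSpace ℂ E]
    {X : Type*} [TopologicalSpace X] [ChartedSpace E X]
    (u : X → EReal) (hu : PSHOnM E u univ) (W : Set X) (n : ℝ)
    (hub : ∀ w ∈ W, u w ≤ (n : EReal))
    (f : ℂ → X) (hf : IsDiscM E f) (hfW : MapsTo f (sphere 0 1) W)
    (z : ℂ) (hz : z ∈ closedBall (0:ℂ) 1) : u (f z) ≤ (n : EReal) := by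
  have hzn : ‖z‖ ≤ 1 := by simpa [mem_closedBall, dist_zero_right] using hz
  rcases eq_or_lt_of_le hzn with heq | hlt
  · exact hub _ (hfW (by simpa [mem_sphere_zero_iff_norm] using heq))
  · set g : ℂ → X := fun w => f (mob z w) with hg
    have hmobmaps : MapsTo (mob z) (closedBall 0 1) (closedBall (0:ℂ) 1) := by
      intro w hw
      have hwn : ‖w‖ ≤ 1 := by simpa [mem_closedBall, dist_zero_right] using hw
      simpa [mem_closedBall, dist_zero_right] using mob_norm_le z w hlt hwn
    have hmobball : MapsTo (mob z) (ball 0 1) (ball (0:ℂ) 1) := by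
      intro w hw
      have hwn : ‖w‖ < 1 := by simpa [mem_ball, dist_zero_right] using hw
      simpa [mem_ball, dist_zero_right] using mob_norm_lt z w hlt hwn
    have hgd : IsDiscM E g := by
      constructor
      · exact hf.1.comp ((mob_diffOn z hlt).continuousOn) hmobmaps
      · refine hf.2.comp ?_ ?_
        · exact mdifferentiableOn_iff_differentiableOn.mpr
            ((mob_diffOn z hlt).mono ball_subset_closedBall)
        · exact hmobball
    have hmean := hu.2.2 g hgd (mapsTo_univ _ _)
    have hg0 : g 0 = f z := by rw [hg]; simp [mob_zero]
    rw [hg0] at hmean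
    refine hmean.trans (circAvg_le_const fun t => ?_)
    have hes : Complex.exp (t * Complex.I) ∈ sphere (0:ℂ) 1 := by
      rw [mem_sphere_zero_iff_norm]
      exact Complex.norm_exp_ofReal_mul_I t
    have : mob z (Complex.exp (t * Complex.I)) ∈ sphere (0:ℂ) 1 := by
      rw [mem_sphere_zero_iff_norm]
      exact mob_norm_eq z _ hlt (mem_sphere_zero_iff_norm.mp hes)
    exact hub _ (hfW this)

/-- for `W` a domain in a complex manifold `X` covered by analytic discs
with boundaries in `W`, `φ` upper semicontinuous on `W` and bounded above by `m`, and
`φₙ = φ` on `W`, `= n` off `W` (for real `n ≥ m`), the largest plurisubharmonic minorant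
`Pφₙ` equals the largest plurisubharmonic subextension `Sφ`. -/
theorem stmt5 (E : Type*) [NormedAddCommGroup E] [NormedSpace ℂ E]
    {X : Type*} [TopologicalSpace X] [ChartedSpace E X]
    (W : Set X) (hWo : IsOpen W) (hWc : IsConnected W)
    (hcov : ∀ x : X, ∃ f : ℂ → X, IsDiscM E f ∧ MapsTo f (sphere 0 1) W ∧
      ∃ z ∈ closedBall (0:ℂ) 1, f z = x)
    (φ : X → EReal) (husc : UpperSemicontinuousOn φ W) (hne : ∀ w ∈ W, φ w ≠ ⊤)
    (m : ℝ) (hm : ∀ w ∈ W, φ w ≤ (m : EReal)) (n : ℝ) (hn : m ≤ n) :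
    (fun x => ⨆ u : {u : X → EReal // PSHOnM E u univ ∧
        ∀ y : X, u y ≤ (if y ∈ W then φ y else (n : EReal))}, u.1 x) =
    (fun x => ⨆ u : {u : X → EReal // PSHOnM E u univ ∧ ∀ w ∈ W, u w ≤ φ w}, u.1 x) := by
  funext x
  apply le_antisymm
  · refine iSup_le fun u => ?_
    refine le_iSup_of_le (i := ⟨u.1, u.2.1, fun w hw => ?_⟩) le_rfl
    have := u.2.2 w
    rwa [if_pos hw] at this
  · refine iSup_le fun u => ?_
    refine le_iSup_of_le (i := ⟨u.1, u.2.1, fun y => ?_⟩) le_rfl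
    by_cases hy : y ∈ W
    · rw [if_pos hy]; exact u.2.2 y hy
    · rw [if_neg hy]
      obtain ⟨f, hfd, hfW, z, hz, hfz⟩ := hcov y
      have hub : ∀ w ∈ W, u.1 w ≤ (n : EReal) := fun w hw =>
        (u.2.2 w hw).trans ((hm w hw).trans (EReal.coe_le_coe_iff.mpr hn))
      rw [← hfz]
      exact psh_le_on_disc u.1 u.2.1 W n hub f hfd hfW z hz
end

section
/- Let F : closure(𝔻) × (closure(𝔻)\{0}) → ℂⁿ be continuous, holomorphic in each variable on the open sets, such that for each z the map w ↦ F(z,w) − h(w) has a pole at 0 of order at most j (where h : closure(𝔻) → ℂⁿ is continuous, holomorphic on 𝔻), and for each w ≠ 0 the map z ↦ F(z,w) − h(w) vanishes at z = 0. Then for every integer k ≥ j, the map (z,w) ↦ F(z w^k, w) extends to a continuous map closure(𝔻) × closure(𝔻) → ℂⁿ that is holomorphic on 𝔻 × 𝔻. -/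
open Metric Set MeasureTheory
open scoped Real Topology

section Aux

variable {E : Type*} [NormedAddCommGroup E] [NormedSpace ℂ E] [CompleteSpace E]

/-- Continuity of a parametric interval integral over a closed set in a proper space. -/
lemma contParamOn {X : Type*} [MetricSpace X] [ProperSpace X] {s : Set X}
    (hs : IsClosed s) {f : X → ℝ → E}
    (hf : ContinuousOn (fun q : X × ℝ => f q.1 q.2) (s ×ˢ (univ : Set ℝ))) :
    ContinuousOn (fun x => ∫ θ in (0:ℝ)..(2*π), f x θ) s := by
  have h2π : (0:ℝ) ≤ 2*π := by positivity
  intro x₀ hx₀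
  have key : ContinuousWithinAt (fun x => ∫ θ, f x θ ∂(volume.restrict (Ioc 0 (2*π)))) s x₀ := by
    obtain ⟨C, hC⟩ : ∃ C, ∀ q ∈ ((closedBall x₀ 1 ∩ s) ×ˢ Icc (0:ℝ) (2*π)),
        ‖(fun q : X × ℝ => f q.1 q.2) q‖ ≤ C := by
      refine IsCompact.exists_bound_of_continuousOn ?_ (hf.mono ?_)
      · exact ((isCompact_closedBall x₀ 1).inter_right hs).prod isCompact_Icc
      · exact prod_mono inter_subset_right (subset_univ _)
    refine continuousWithinAt_of_dominated (bound := fun _ => C) ?_ ?_ ?_ ?_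
    · filter_upwards [self_mem_nhdsWithin] with x hx
      have : Continuous fun θ => f x θ :=
        hf.comp_continuous (continuous_const.prodMk continuous_id) (fun θ => ⟨hx, trivial⟩)
      exact this.aestronglyMeasurable
    · filter_upwards [Filter.inter_mem
        (mem_nhdsWithin_of_mem_nhds (closedBall_mem_nhds x₀ one_pos)) self_mem_nhdsWithin]
        with x hx
      filter_upwards [ae_restrict_mem measurableSet_Ioc] with θ hθ
      exact hC (x, θ) ⟨hx, Ioc_subset_Icc_self hθ⟩
    · exact (integrableOn_const_iff).2 (Or.inr measure_Ioc_lt_top)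
    · filter_upwards [ae_restrict_mem measurableSet_Ioc] with θ _
      have h1 := hf (x₀, θ) ⟨hx₀, trivial⟩
      have hmap : ContinuousWithinAt (fun x : X => ((x, θ) : X × ℝ)) s x₀ :=
        (continuous_id.prodMk continuous_const).continuousWithinAt
      exact ContinuousWithinAt.comp (f := fun x : X => ((x, θ) : X × ℝ)) h1 hmap
        (fun x hx => ⟨hx, trivial⟩)
  simpa only [intervalIntegral.integral_of_le h2π] using key

/-- Cauchy integral representation of the derivative at the center of a disc. -/
lemma deriv_eq_circle {g : ℂ → E} {c : ℂ} {δ : ℝ} (hδ : 0 < δ)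
    (hg : DiffContOnCl ℂ g (ball c δ)) :
    deriv g c = (2 * ↑π * Complex.I)⁻¹ • ∮ z in C(c, δ), ((z - c)^2)⁻¹ • g z := by
  have hcont : ContinuousOn g (closedBall c δ) := by
    simpa [closure_ball c hδ.ne'] using hg.continuousOn
  have hci : CircleIntegrable g c δ :=
    (hcont.mono sphere_subset_closedBall).circleIntegrable hδ.le
  set R : NNReal := ⟨δ, hδ.le⟩ with hR
  have hRδ : (R : ℝ) = δ := rfl
  have hci' : CircleIntegrable g c (R : ℝ) := by rwa [hRδ]
  have hps := hasFPowerSeriesOn_cauchy_integral hci' (show (0:NNReal) < R from NNReal.coe_pos.1 hδ)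
  have heq : (fun w => (2 * ↑π * Complex.I)⁻¹ • ∮ z in C(c, (R:ℝ)), (z - w)⁻¹ • g z) =ᶠ[𝓝 c] g := by
    filter_upwards [isOpen_ball.mem_nhds (mem_ball_self hδ)] with w hw
    rw [hRδ, hg.circleIntegral_sub_inv_smul hw, smul_smul,
      inv_mul_cancel₀ Complex.two_pi_I_ne_zero, one_smul]
  have hderiv : deriv g c = (cauchyPowerSeries g c (R:ℝ) 1) fun _ => 1 := by
    rw [← heq.deriv_eq]
    exact hps.hasFPowerSeriesAt.deriv
  rw [hderiv, cauchyPowerSeries_apply, hRδ]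
  congr 1
  refine circleIntegral.integral_congr hδ.le fun z _ => ?_
  rw [pow_one, one_div, smul_smul, ← mul_inv, ← sq]

/-- Holomorphy in two complex variables of a parametric interval integral. -/
lemma holoParam {f : ℂ × ℂ → ℝ → E} {V : Set (ℂ × ℂ)} (hV : IsOpen V)
    (hf : ContinuousOn (fun q : (ℂ × ℂ) × ℝ => f q.1 q.2) (V ×ˢ (univ : Set ℝ)))
    (hd : ∀ θ : ℝ, DifferentiableOn ℂ (fun p => f p θ) V) :
    DifferentiableOn ℂ (fun p => ∫ θ in (0:ℝ)..(2*π), f p θ) V := by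
  have h2π : (0:ℝ) ≤ 2*π := by positivity
  intro p₀ hp₀
  suffices hh : DifferentiableAt ℂ (fun p => ∫ θ in (0:ℝ)..(2*π), f p θ) p₀ from
    hh.differentiableWithinAt
  obtain ⟨ε, hε, hball⟩ := Metric.isOpen_iff.1 hV p₀ hp₀
  set δ := ε/3 with hδdef
  have hδ : 0 < δ := by positivity
  have hsub : closedBall p₀ (2*δ) ⊆ V := fun x hx => by
    apply hball
    have : dist x p₀ ≤ 2*δ := mem_closedBall.1 hx
    have : 2*δ < ε := by rw [hδdef]; linarith
    exact mem_ball.2 (lt_of_le_of_lt (mem_closedBall.1 hx) this)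
  have hball_sub : ball p₀ δ ⊆ closedBall p₀ (2*δ) := fun x hx =>
    mem_closedBall.2 (le_trans (mem_ball.1 hx).le (by linarith))
  -- slices are continuous
  have hslice : ∀ x ∈ V, Continuous fun θ => f x θ := fun x hx =>
    hf.comp_continuous (continuous_const.prodMk continuous_id) (fun θ => ⟨hx, trivial⟩)
  -- the coordinate inclusion facts
  have hcoord1 : ∀ x ∈ closedBall p₀ δ, ∀ z ∈ closedBall x.1 δ,
      ((z, x.2) : ℂ × ℂ) ∈ V := by
    intro x hx z hz
    apply hsub
    rw [mem_closedBall] at hx hz ⊢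
    have hx1 : dist x.1 p₀.1 ≤ δ := le_trans (le_max_left _ _) (by rw [← Prod.dist_eq]; exact hx)
    have hx2 : dist x.2 p₀.2 ≤ δ := le_trans (le_max_right _ _) (by rw [← Prod.dist_eq]; exact hx)
    rw [Prod.dist_eq]
    refine max_le ?_ (by linarith)
    calc dist z p₀.1 ≤ dist z x.1 + dist x.1 p₀.1 := dist_triangle _ _ _
      _ ≤ 2*δ := by linarith
  have hcoord2 : ∀ x ∈ closedBall p₀ δ, ∀ w ∈ closedBall x.2 δ,
      ((x.1, w) : ℂ × ℂ) ∈ V := by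
    intro x hx w hw
    apply hsub
    rw [mem_closedBall] at hx hw ⊢
    have hx1 : dist x.1 p₀.1 ≤ δ := le_trans (le_max_left _ _) (by rw [← Prod.dist_eq]; exact hx)
    have hx2 : dist x.2 p₀.2 ≤ δ := le_trans (le_max_right _ _) (by rw [← Prod.dist_eq]; exact hx)
    rw [Prod.dist_eq]
    refine max_le (by linarith) ?_
    calc dist w p₀.2 ≤ dist w x.2 + dist x.2 p₀.2 := dist_triangle _ _ _
      _ ≤ 2*δ := by linarith
  -- membership versions in the closed ball of radius 2δ
  have hcoordB1 : ∀ x ∈ closedBall p₀ δ, ∀ z ∈ closedBall x.1 δ,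
      ((z, x.2) : ℂ × ℂ) ∈ closedBall p₀ (2*δ) := by
    intro x hx z hz
    rw [mem_closedBall] at hx hz ⊢
    have hx1 : dist x.1 p₀.1 ≤ δ := le_trans (le_max_left _ _) (by rw [← Prod.dist_eq]; exact hx)
    have hx2 : dist x.2 p₀.2 ≤ δ := le_trans (le_max_right _ _) (by rw [← Prod.dist_eq]; exact hx)
    rw [Prod.dist_eq]
    refine max_le ?_ (by linarith)
    calc dist z p₀.1 ≤ dist z x.1 + dist x.1 p₀.1 := dist_triangle _ _ _
      _ ≤ 2*δ := by linarith
  have hcoordB2 : ∀ x ∈ closedBall p₀ δ, ∀ w ∈ closedBall x.2 δ,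
      ((x.1, w) : ℂ × ℂ) ∈ closedBall p₀ (2*δ) := by
    intro x hx w hw
    rw [mem_closedBall] at hx hw ⊢
    have hx1 : dist x.1 p₀.1 ≤ δ := le_trans (le_max_left _ _) (by rw [← Prod.dist_eq]; exact hx)
    have hx2 : dist x.2 p₀.2 ≤ δ := le_trans (le_max_right _ _) (by rw [← Prod.dist_eq]; exact hx)
    rw [Prod.dist_eq]
    refine max_le (by linarith) ?_
    calc dist w p₀.2 ≤ dist w x.2 + dist x.2 p₀.2 := dist_triangle _ _ _
      _ ≤ 2*δ := by linarith
  -- differentiability of one variable slices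
  have hdz : ∀ (θ : ℝ), ∀ x ∈ closedBall p₀ δ,
      DifferentiableOn ℂ (fun z => f (z, x.2) θ) (ball x.1 δ) := by
    intro θ x hx
    exact (hd θ).comp ((differentiable_id.prodMk (differentiable_const _)).differentiableOn)
      (fun z hz => hsub (hcoordB1 x hx z (ball_subset_closedBall hz)))
  have hdw : ∀ (θ : ℝ), ∀ x ∈ closedBall p₀ δ,
      DifferentiableOn ℂ (fun w => f (x.1, w) θ) (ball x.2 δ) := by
    intro θ x hx
    exact (hd θ).comp (((differentiable_const _).prodMk differentiable_id).differentiableOn)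
      (fun w hw => hsub (hcoordB2 x hx w (ball_subset_closedBall hw)))
  -- a uniform bound
  obtain ⟨M, hM⟩ : ∃ M, ∀ q ∈ (closedBall p₀ (2*δ) ×ˢ Icc (0:ℝ) (2*π)),
      ‖(fun q : (ℂ × ℂ) × ℝ => f q.1 q.2) q‖ ≤ M := by
    refine IsCompact.exists_bound_of_continuousOn ((isCompact_closedBall _ _).prod isCompact_Icc)
      (hf.mono (prod_mono hsub (subset_univ _)))
  have hM0 : 0 ≤ M := le_trans (norm_nonneg _)
    (hM (p₀, 0) ⟨mem_closedBall_self (by positivity), le_refl 0, h2π⟩)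
  -- the partial derivatives and candidate Fréchet derivative
  set d1 : (ℂ × ℂ) → ℝ → E := fun x θ => deriv (fun z => f (z, x.2) θ) x.1 with hd1def
  set d2 : (ℂ × ℂ) → ℝ → E := fun x θ => deriv (fun w => f (x.1, w) θ) x.2 with hd2def
  set F' : (ℂ × ℂ) → ℝ → (ℂ × ℂ) →L[ℂ] E := fun x θ =>
    (ContinuousLinearMap.fst ℂ ℂ ℂ).smulRight (d1 x θ) +
    (ContinuousLinearMap.snd ℂ ℂ ℂ).smulRight (d2 x θ) with hF'def
  have hF'apply : ∀ x θ v, F' x θ v = v.1 • d1 x θ + v.2 • d2 x θ := by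
    intro x θ v
    simp [hF'def, ContinuousLinearMap.smulRight_apply]
  -- the derivative identification
  have hDiff : ∀ (t : ℝ), ∀ x ∈ ball p₀ δ, HasFDerivAt (fun p => f p t) (F' x t) x := by
    intro t x hx
    have hxV : x ∈ V := hsub (hball_sub hx)
    have hxC : x ∈ closedBall p₀ δ := ball_subset_closedBall hx
    have hL : HasFDerivAt (fun p => f p t) (fderiv ℂ (fun p => f p t) x) x :=
      (((hd t) x hxV).differentiableAt (hV.mem_nhds hxV)).hasFDerivAt
    set L := fderiv ℂ (fun p => f p t) x with hLdef
    have hLx1 : HasFDerivAt (fun p => f p t) L ((x.1, x.2) : ℂ × ℂ) := by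
      rw [Prod.mk.eta]; exact hL
    have hline1 : HasDerivAt (fun z : ℂ => ((z, x.2) : ℂ × ℂ)) ((1:ℂ), (0:ℂ)) x.1 :=
      (hasDerivAt_id _).prodMk (hasDerivAt_const _ _)
    have hline2 : HasDerivAt (fun w : ℂ => ((x.1, w) : ℂ × ℂ)) ((0:ℂ), (1:ℂ)) x.2 :=
      (hasDerivAt_const _ _).prodMk (hasDerivAt_id _)
    have h1 : HasDerivAt (fun z => f (z, x.2) t) (L ((1:ℂ), (0:ℂ))) x.1 :=
      HasFDerivAt.comp_hasDerivAt (f := fun z : ℂ => ((z, x.2) : ℂ × ℂ)) x.1 hLx1 hline1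
    have h2 : HasDerivAt (fun w => f (x.1, w) t) (L ((0:ℂ), (1:ℂ))) x.2 :=
      hLx1.comp_hasDerivAt x.2 hline2
    have hFL : F' x t = L := by
      apply ContinuousLinearMap.ext
      intro v
      have hv : (v : ℂ × ℂ) = v.1 • ((1:ℂ), (0:ℂ)) + v.2 • ((0:ℂ), (1:ℂ)) := by
        simp [Prod.ext_iff]
      have hLv : L v = v.1 • L ((1:ℂ), (0:ℂ)) + v.2 • L ((0:ℂ), (1:ℂ)) := by
        conv_lhs => rw [hv]
        rw [map_add, _root_.map_smul, _root_.map_smul]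
      rw [hF'apply, hLv, ← h1.deriv, ← h2.deriv]
    rw [hFL]; exact hL
  -- norm bound on the candidate derivative
  have hnorm_fst : ‖(ContinuousLinearMap.fst ℂ ℂ ℂ)‖ ≤ 1 :=
    ContinuousLinearMap.opNorm_le_bound _ zero_le_one (fun v => by
      simpa [one_mul] using norm_fst_le v)
  have hnorm_snd : ‖(ContinuousLinearMap.snd ℂ ℂ ℂ)‖ ≤ 1 :=
    ContinuousLinearMap.opNorm_le_bound _ zero_le_one (fun v => by
      simpa [one_mul] using norm_snd_le v)
  have hBound : ∀ (t : ℝ), t ∈ Icc (0:ℝ) (2*π) → ∀ x ∈ ball p₀ δ,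
      ‖F' x t‖ ≤ 2*((2*M+1)/δ) := by
    intro t ht x hx
    have hxC : x ∈ closedBall p₀ δ := ball_subset_closedBall hx
    have hmemx : ((x.1, x.2), t) ∈ (closedBall p₀ (2*δ) ×ˢ Icc (0:ℝ) (2*π)) :=
      ⟨hcoordB1 x hxC x.1 (mem_closedBall_self hδ.le), ht⟩
    have hb1 : ‖d1 x t‖ ≤ (2*M+1)/δ := by
      refine Complex.norm_deriv_le_div_of_mapsTo_ball (hdz t x hxC) ?_ hδ
      intro z hz
      refine mem_closedBall_iff_norm.2 (le_of_lt ?_)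
      have hz' : ((z, x.2), t) ∈ (closedBall p₀ (2*δ) ×ˢ Icc (0:ℝ) (2*π)) :=
        ⟨hcoordB1 x hxC z (ball_subset_closedBall hz), ht⟩
      calc ‖f (z, x.2) t - f (x.1, x.2) t‖ ≤ ‖f (z, x.2) t‖ + ‖f (x.1, x.2) t‖ :=
            norm_sub_le _ _
        _ ≤ M + M := add_le_add (hM _ hz') (hM _ hmemx)
        _ < 2*M+1 := by linarith
    have hb2 : ‖d2 x t‖ ≤ (2*M+1)/δ := by
      refine Complex.norm_deriv_le_div_of_mapsTo_ball (hdw t x hxC) ?_ hδ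
      intro w hw
      refine mem_closedBall_iff_norm.2 (le_of_lt ?_)
      have hw' : ((x.1, w), t) ∈ (closedBall p₀ (2*δ) ×ˢ Icc (0:ℝ) (2*π)) :=
        ⟨hcoordB2 x hxC w (ball_subset_closedBall hw), ht⟩
      calc ‖f (x.1, w) t - f (x.1, x.2) t‖ ≤ ‖f (x.1, w) t‖ + ‖f (x.1, x.2) t‖ :=
            norm_sub_le _ _
        _ ≤ M + M := add_le_add (hM _ hw') (hM _ hmemx)
        _ < 2*M+1 := by linarith
    have h21 : (0:ℝ) ≤ (2*M+1)/δ := by positivity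
    calc ‖F' x t‖ ≤ ‖(ContinuousLinearMap.fst ℂ ℂ ℂ).smulRight (d1 x t)‖ +
          ‖(ContinuousLinearMap.snd ℂ ℂ ℂ).smulRight (d2 x t)‖ := norm_add_le _ _
      _ ≤ 1 * ((2*M+1)/δ) + 1 * ((2*M+1)/δ) := by
          rw [ContinuousLinearMap.norm_smulRight_apply, ContinuousLinearMap.norm_smulRight_apply]
          exact add_le_add (mul_le_mul hnorm_fst hb1 (norm_nonneg _) zero_le_one)
            (mul_le_mul hnorm_snd hb2 (norm_nonneg _) zero_le_one)
      _ = 2*((2*M+1)/δ) := by ring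
  -- continuity in the parameter of the derivative at p₀, via the Cauchy formula
  have hp₀C : p₀ ∈ closedBall p₀ δ := mem_closedBall_self hδ.le
  have hcm : ∀ (R : ℝ), 0 < R → ∀ θ' : ℝ, circleMap 0 R θ' ≠ 0 := by
    intro R hR θ' h0
    have habs := norm_circleMap_zero R θ'
    rw [h0, norm_zero, abs_of_pos hR] at habs
    exact hR.ne' habs.symm
  have hd1rep : ∀ t : ℝ, d1 p₀ t
      = (2 * ↑π * Complex.I)⁻¹ • ∮ z in C(p₀.1, δ), ((z - p₀.1)^2)⁻¹ • f (z, p₀.2) t := by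
    intro t
    refine deriv_eq_circle hδ ⟨hdz t p₀ hp₀C, ?_⟩
    rw [closure_ball _ hδ.ne']
    refine ContinuousOn.comp (g := fun q : (ℂ × ℂ) × ℝ => f q.1 q.2)
      (f := fun z : ℂ => (((z, p₀.2) : ℂ × ℂ), t)) hf ?_ ?_
    · exact ((continuous_id.prodMk continuous_const).prodMk continuous_const).continuousOn
    · exact fun z hz => ⟨hcoord1 p₀ hp₀C z hz, trivial⟩
  have hd2rep : ∀ t : ℝ, d2 p₀ t
      = (2 * ↑π * Complex.I)⁻¹ • ∮ w in C(p₀.2, δ), ((w - p₀.2)^2)⁻¹ • f (p₀.1, w) t := by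
    intro t
    refine deriv_eq_circle hδ ⟨hdw t p₀ hp₀C, ?_⟩
    rw [closure_ball _ hδ.ne']
    refine ContinuousOn.comp (g := fun q : (ℂ × ℂ) × ℝ => f q.1 q.2)
      (f := fun w : ℂ => (((p₀.1, w) : ℂ × ℂ), t)) hf ?_ ?_
    · exact ((continuous_const.prodMk continuous_id).prodMk continuous_const).continuousOn
    · exact fun w hw => ⟨hcoord2 p₀ hp₀C w hw, trivial⟩
  have hcd1 : Continuous fun t => d1 p₀ t := by
    have hciC : Continuous fun q : ℝ × ℝ =>
        deriv (circleMap p₀.1 δ) q.2 • (((circleMap p₀.1 δ q.2 - p₀.1)^2)⁻¹ •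
          f (circleMap p₀.1 δ q.2, p₀.2) q.1) := by
      refine Continuous.smul ?_ (Continuous.smul ?_ ?_)
      · simp only [deriv_circleMap]
        exact (((continuous_circleMap 0 δ).comp continuous_snd).mul continuous_const)
      · simp only [circleMap_sub_center]
        refine Continuous.inv₀ ?_ ?_
        · exact (((continuous_circleMap 0 δ).comp continuous_snd).pow 2)
        · exact fun q => pow_ne_zero _ (hcm δ hδ q.2)
      · refine hf.comp_continuous
          (f := fun q : ℝ × ℝ => (((circleMap p₀.1 δ q.2, p₀.2) : ℂ × ℂ), q.1)) ?_ ?_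
        · exact (((continuous_circleMap _ _).comp continuous_snd).prodMk
            continuous_const).prodMk continuous_fst
        · intro q
          refine ⟨hcoord1 p₀ hp₀C _ ?_, trivial⟩
          exact sphere_subset_closedBall (circleMap_mem_sphere p₀.1 hδ.le q.2)
    have := contParamOn (X := ℝ) (s := (univ : Set ℝ)) isClosed_univ
      (f := fun t θ' => deriv (circleMap p₀.1 δ) θ' • (((circleMap p₀.1 δ θ' - p₀.1)^2)⁻¹ •
        f (circleMap p₀.1 δ θ', p₀.2) t)) (hciC.continuousOn)
    have hcont : Continuous fun t => ∫ θ' in (0:ℝ)..(2*π),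
        deriv (circleMap p₀.1 δ) θ' • (((circleMap p₀.1 δ θ' - p₀.1)^2)⁻¹ •
          f (circleMap p₀.1 δ θ', p₀.2) t) := by
      rw [← continuousOn_univ]; exact this
    have heq : (fun t => d1 p₀ t) = fun t => (2 * ↑π * Complex.I)⁻¹ •
        ∫ θ' in (0:ℝ)..(2*π), deriv (circleMap p₀.1 δ) θ' •
          (((circleMap p₀.1 δ θ' - p₀.1)^2)⁻¹ • f (circleMap p₀.1 δ θ', p₀.2) t) := by
      funext t
      rw [hd1rep t]
      rfl
    rw [heq]
    exact hcont.const_smul _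
  have hcd2 : Continuous fun t => d2 p₀ t := by
    have hciC : Continuous fun q : ℝ × ℝ =>
        deriv (circleMap p₀.2 δ) q.2 • (((circleMap p₀.2 δ q.2 - p₀.2)^2)⁻¹ •
          f (p₀.1, circleMap p₀.2 δ q.2) q.1) := by
      refine Continuous.smul ?_ (Continuous.smul ?_ ?_)
      · simp only [deriv_circleMap]
        exact (((continuous_circleMap 0 δ).comp continuous_snd).mul continuous_const)
      · simp only [circleMap_sub_center]
        refine Continuous.inv₀ ?_ ?_
        · exact (((continuous_circleMap 0 δ).comp continuous_snd).pow 2)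
        · exact fun q => pow_ne_zero _ (hcm δ hδ q.2)
      · refine hf.comp_continuous
          (f := fun q : ℝ × ℝ => (((p₀.1, circleMap p₀.2 δ q.2) : ℂ × ℂ), q.1)) ?_ ?_
        · exact ((continuous_const.prodMk
            ((continuous_circleMap _ _).comp continuous_snd)).prodMk continuous_fst)
        · intro q
          refine ⟨hcoord2 p₀ hp₀C _ ?_, trivial⟩
          exact sphere_subset_closedBall (circleMap_mem_sphere p₀.2 hδ.le q.2)
    have := contParamOn (X := ℝ) (s := (univ : Set ℝ)) isClosed_univ
      (f := fun t θ' => deriv (circleMap p₀.2 δ) θ' • (((circleMap p₀.2 δ θ' - p₀.2)^2)⁻¹ •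
        f (p₀.1, circleMap p₀.2 δ θ') t)) (hciC.continuousOn)
    have hcont : Continuous fun t => ∫ θ' in (0:ℝ)..(2*π),
        deriv (circleMap p₀.2 δ) θ' • (((circleMap p₀.2 δ θ' - p₀.2)^2)⁻¹ •
          f (p₀.1, circleMap p₀.2 δ θ') t) := by
      rw [← continuousOn_univ]; exact this
    have heq : (fun t => d2 p₀ t) = fun t => (2 * ↑π * Complex.I)⁻¹ •
        ∫ θ' in (0:ℝ)..(2*π), deriv (circleMap p₀.2 δ) θ' •
          (((circleMap p₀.2 δ θ' - p₀.2)^2)⁻¹ • f (p₀.1, circleMap p₀.2 δ θ') t) := by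
      funext t
      rw [hd2rep t]
      rfl
    rw [heq]
    exact hcont.const_smul _
  have hF'cont : Continuous (F' p₀) := by
    have e1 : Continuous fun t => (ContinuousLinearMap.fst ℂ ℂ ℂ).smulRight (d1 p₀ t) :=
      (ContinuousLinearMap.smulRightL ℂ (ℂ × ℂ) E (ContinuousLinearMap.fst ℂ ℂ ℂ)).continuous.comp
        hcd1
    have e2 : Continuous fun t => (ContinuousLinearMap.snd ℂ ℂ ℂ).smulRight (d2 p₀ t) :=
      (ContinuousLinearMap.smulRightL ℂ (ℂ × ℂ) E (ContinuousLinearMap.snd ℂ ℂ ℂ)).continuous.comp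
        hcd2
    exact e1.add e2
  -- apply the dominated differentiation theorem
  have hmain := intervalIntegral.hasFDerivAt_integral_of_dominated_of_fderiv_le
    (𝕜 := ℂ) (μ := volume) (F := f) (F' := F') (x₀ := p₀) (a := 0) (b := 2*π)
    (bound := fun _ => 2*((2*M+1)/δ)) (ball_mem_nhds p₀ hδ) ?_ ?_ ?_ ?_ ?_ ?_
  · exact hmain.differentiableAt
  · filter_upwards [hV.mem_nhds hp₀] with x hx
    exact (hslice x hx).aestronglyMeasurable
  · exact (hslice p₀ hp₀).intervalIntegrable _ _
  · haveI : SecondCountableTopologyEither ℝ ((ℂ × ℂ) →L[ℂ] E) :=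
      secondCountableTopologyEither_of_left _ _
    exact hF'cont.aestronglyMeasurable
  · refine Filter.Eventually.of_forall fun t ht x hx => ?_
    refine hBound t ?_ x hx
    rw [uIoc_of_le h2π] at ht
    exact Ioc_subset_Icc_self ht
  · exact _root_.intervalIntegrable_const
  · exact Filter.Eventually.of_forall fun t _ x hx => hDiff t x hx

end Aux

section Joint

variable {E : Type*} [NormedAddCommGroup E] [NormedSpace ℂ E] [CompleteSpace E]

/-- Separate holomorphy plus joint continuity implies joint holomorphy
on the punctured bidisc. -/
lemma joint_holo {F : ℂ × ℂ → E}
    (hFc : ContinuousOn F (closedBall 0 1 ×ˢ (closedBall 0 1 \ {0})))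
    (hFw : ∀ z ∈ closedBall (0:ℂ) 1,
      DifferentiableOn ℂ (fun w => F (z, w)) (ball 0 1 \ {0}))
    (hFz : ∀ w ∈ closedBall (0:ℂ) 1 \ {0},
      DifferentiableOn ℂ (fun z => F (z, w)) (ball 0 1)) :
    DifferentiableOn ℂ F (ball 0 1 ×ˢ (ball 0 1 \ {0})) := by
  rintro p₀ ⟨hp1, hp2⟩
  have hp1n : ‖p₀.1‖ < 1 := mem_ball_zero_iff.1 hp1
  have hp2n : ‖p₀.2‖ < 1 := mem_ball_zero_iff.1 hp2.1
  have hp2ne : p₀.2 ≠ 0 := hp2.2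
  have hp2pos : 0 < ‖p₀.2‖ := norm_pos_iff.2 hp2ne
  set t : ℝ := (1 - ‖p₀.1‖)/2 with htdef
  set s : ℝ := min ‖p₀.2‖ (1 - ‖p₀.2‖) / 2 with hsdef
  have ht : 0 < t := by rw [htdef]; linarith
  have hs : 0 < s := by
    rw [hsdef]
    have := lt_min hp2pos (by linarith : (0:ℝ) < 1 - ‖p₀.2‖)
    linarith
  have hs1 : s ≤ ‖p₀.2‖/2 := by
    rw [hsdef]
    have := min_le_left ‖p₀.2‖ (1 - ‖p₀.2‖)
    linarith
  have hs2 : s ≤ (1 - ‖p₀.2‖)/2 := by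
    rw [hsdef]
    have := min_le_right ‖p₀.2‖ (1 - ‖p₀.2‖)
    linarith
  -- membership facts
  have hζmem : ∀ ζ ∈ closedBall p₀.1 t, ζ ∈ ball (0:ℂ) 1 := by
    intro ζ hζ
    rw [mem_closedBall_iff_norm] at hζ
    rw [mem_ball_zero_iff]
    calc ‖ζ‖ = ‖ζ - p₀.1 + p₀.1‖ := by ring_nf
      _ ≤ ‖ζ - p₀.1‖ + ‖p₀.1‖ := norm_add_le _ _
      _ < 1 := by rw [htdef] at hζ; linarith
  have hηmem : ∀ η ∈ closedBall p₀.2 s, η ∈ ball (0:ℂ) 1 \ {0} := by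
    intro η hη
    rw [mem_closedBall_iff_norm] at hη
    have hlow : ‖p₀.2‖ - s ≤ ‖η‖ := by
      have := norm_sub_norm_le η p₀.2
      have h2 := norm_sub_rev η p₀.2
      calc ‖p₀.2‖ - s ≤ ‖p₀.2‖ - ‖η - p₀.2‖ := by linarith
        _ ≤ ‖η‖ := by
            have := abs_norm_sub_norm_le η p₀.2
            rw [abs_le] at this
            linarith [this.1]
    constructor
    · rw [mem_ball_zero_iff]
      calc ‖η‖ = ‖η - p₀.2 + p₀.2‖ := by ring_nf
        _ ≤ ‖η - p₀.2‖ + ‖p₀.2‖ := norm_add_le _ _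
        _ < 1 := by linarith
    · rw [mem_singleton_iff]
      intro h0
      rw [h0, norm_zero] at hlow
      linarith
  have hηmem' : ∀ η ∈ closedBall p₀.2 s, η ∈ closedBall (0:ℂ) 1 \ {0} := fun η hη =>
    ⟨ball_subset_closedBall (hηmem η hη).1, (hηmem η hη).2⟩
  -- inner Cauchy transform
  set W : ℂ → ℂ → E := fun y η =>
    (2 * ↑π * Complex.I)⁻¹ • ∮ ζ in C(p₀.1, t), (ζ - y)⁻¹ • F (ζ, η) with hWdef
  have hslice_z : ∀ η ∈ closedBall p₀.2 s, DiffContOnCl ℂ (fun ζ => F (ζ, η)) (ball p₀.1 t) := by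
    intro η hη
    refine ⟨(hFz η (hηmem' η hη)).mono (fun ζ hζ => hζmem ζ (ball_subset_closedBall hζ)), ?_⟩
    refine ((hFz η (hηmem' η hη)).continuousOn.mono ?_)
    intro ζ hζ
    exact hζmem ζ (by rwa [← closure_ball p₀.1 ht.ne'])
  have hWeq : ∀ y ∈ ball p₀.1 t, ∀ η ∈ closedBall p₀.2 s, W y η = F (y, η) := by
    intro y hy η hη
    show (2 * ↑π * Complex.I)⁻¹ • (∮ ζ in C(p₀.1, t), (ζ - y)⁻¹ • F (ζ, η)) = F (y, η)
    rw [(hslice_z η hη).circleIntegral_sub_inv_smul hy, smul_smul,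
      inv_mul_cancel₀ Complex.two_pi_I_ne_zero, one_smul]
  -- joint continuity of W
  have hWcont : ContinuousOn (fun q : ℂ × ℂ => W q.1 q.2)
      (closedBall p₀.1 (t/2) ×ˢ sphere p₀.2 s) := by
    have hint := contParamOn (X := ℂ × ℂ)
      (s := closedBall p₀.1 (t/2) ×ˢ sphere p₀.2 s)
      ((isClosed_closedBall).prod (isClosed_sphere))
      (f := fun q θ => deriv (circleMap p₀.1 t) θ •
        ((circleMap p₀.1 t θ - q.1)⁻¹ • F (circleMap p₀.1 t θ, q.2))) ?_
    · intro q hq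
      have := hint q hq
      have heq : ∀ q : ℂ × ℂ, W q.1 q.2 = (2 * ↑π * Complex.I)⁻¹ •
          ∫ θ in (0:ℝ)..(2*π), deriv (circleMap p₀.1 t) θ •
            ((circleMap p₀.1 t θ - q.1)⁻¹ • F (circleMap p₀.1 t θ, q.2)) := fun q => rfl
      simp only [heq]
      exact this.const_smul _
    · -- continuity of the integrand
      refine ContinuousOn.smul ?_ (ContinuousOn.smul ?_ ?_)
      · simp only [deriv_circleMap]
        exact (((continuous_circleMap 0 t).comp continuous_snd).mul continuous_const).continuousOn
      · refine ContinuousOn.inv₀ ?_ ?_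
        · exact (((continuous_circleMap _ _).comp continuous_snd).sub
            continuous_fst.fst).continuousOn
        · rintro ⟨q, θ⟩ ⟨hq, -⟩
          have hq1 : q.1 ∈ closedBall p₀.1 (t/2) := hq.1
          rw [mem_closedBall_iff_norm] at hq1
          have hcm : circleMap p₀.1 t θ ∈ sphere p₀.1 t := circleMap_mem_sphere _ ht.le _
          rw [mem_sphere_iff_norm] at hcm
          intro h0
          rw [sub_eq_zero] at h0
          rw [h0] at hcm
          have : ‖q.1 - p₀.1‖ = t := hcm
          linarith
      · refine ContinuousOn.comp (f := fun q : (ℂ × ℂ) × ℝ =>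
          ((circleMap p₀.1 t q.2, q.1.2) : ℂ × ℂ)) hFc ?_ ?_
        · exact (((continuous_circleMap _ _).comp continuous_snd).prodMk
            (continuous_snd.comp continuous_fst)).continuousOn
        · rintro ⟨q, θ⟩ ⟨hq, -⟩
          refine ⟨ball_subset_closedBall (hζmem _ (sphere_subset_closedBall
            (circleMap_mem_sphere _ ht.le _))), ?_⟩
          exact hηmem' _ (sphere_subset_closedBall hq.2)
  -- the double Cauchy transform
  set Frep : ℂ × ℂ → E := fun p =>
    (2 * ↑π * Complex.I)⁻¹ • ∮ η in C(p₀.2, s), (η - p.2)⁻¹ • W p.1 η with hFrepdef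
  have hslice_w : ∀ y ∈ closedBall (0:ℂ) 1, DiffContOnCl ℂ (fun w => F (y, w)) (ball p₀.2 s) := by
    intro y hy
    refine ⟨(hFw y hy).mono (fun w hw => hηmem w (ball_subset_closedBall hw)), ?_⟩
    refine (hFw y hy).continuousOn.mono ?_
    intro w hw
    exact hηmem w (by rwa [← closure_ball p₀.2 hs.ne'])
  have hFrepeq : ∀ p ∈ ball p₀.1 t ×ˢ ball p₀.2 s, Frep p = F p := by
    rintro p ⟨hq1, hq2⟩
    show (2 * ↑π * Complex.I)⁻¹ • (∮ η in C(p₀.2, s), (η - p.2)⁻¹ • W p.1 η) = F p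
    have hcongr : (∮ η in C(p₀.2, s), (η - p.2)⁻¹ • W p.1 η)
        = ∮ η in C(p₀.2, s), (η - p.2)⁻¹ • F (p.1, η) := by
      refine circleIntegral.integral_congr hs.le fun η hη => ?_
      rw [hWeq p.1 hq1 η (sphere_subset_closedBall hη)]
    rw [hcongr, (hslice_w p.1 (ball_subset_closedBall (hζmem p.1
      (ball_subset_closedBall hq1)))).circleIntegral_sub_inv_smul hq2, smul_smul,
      inv_mul_cancel₀ Complex.two_pi_I_ne_zero, one_smul, Prod.mk.eta]
  -- differentiability of Frep via holoParam
  set V : Set (ℂ × ℂ) := ball p₀.1 (t/2) ×ˢ ball p₀.2 s with hVdef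
  have hVopen : IsOpen V := isOpen_ball.prod isOpen_ball
  have hp₀V : p₀ ∈ V := ⟨mem_ball_self (by linarith), mem_ball_self hs⟩
  have hFrepdiff : DifferentiableOn ℂ Frep V := by
    have hmain := holoParam (E := E) hVopen
      (f := fun p θ => deriv (circleMap p₀.2 s) θ •
        ((circleMap p₀.2 s θ - p.2)⁻¹ • W p.1 (circleMap p₀.2 s θ))) ?_ ?_
    · have heq : Frep = fun p => (2 * ↑π * Complex.I)⁻¹ •
          ∫ θ in (0:ℝ)..(2*π), deriv (circleMap p₀.2 s) θ •
            ((circleMap p₀.2 s θ - p.2)⁻¹ • W p.1 (circleMap p₀.2 s θ)) := rfl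
      rw [heq]
      exact hmain.const_smul _
    · -- joint continuity of the integrand
      refine ContinuousOn.smul ?_ (ContinuousOn.smul ?_ ?_)
      · simp only [deriv_circleMap]
        exact (((continuous_circleMap 0 s).comp continuous_snd).mul continuous_const).continuousOn
      · refine ContinuousOn.inv₀ ?_ ?_
        · exact (((continuous_circleMap _ _).comp continuous_snd).sub
            continuous_fst.snd).continuousOn
        · rintro ⟨p, θ⟩ ⟨hp, -⟩
          have hp2' : p.2 ∈ ball p₀.2 s := hp.2
          rw [mem_ball_iff_norm] at hp2'
          have hcm : circleMap p₀.2 s θ ∈ sphere p₀.2 s := circleMap_mem_sphere _ hs.le _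
          rw [mem_sphere_iff_norm] at hcm
          intro h0
          rw [sub_eq_zero] at h0
          rw [h0] at hcm
          rw [hcm] at hp2'
          exact lt_irrefl _ hp2'
      · refine ContinuousOn.comp (f := fun q : (ℂ × ℂ) × ℝ =>
          ((q.1.1, circleMap p₀.2 s q.2) : ℂ × ℂ)) hWcont ?_ ?_
        · exact ((continuous_fst.fst).prodMk
            ((continuous_circleMap _ _).comp continuous_snd)).continuousOn
        · rintro ⟨p, θ⟩ ⟨hp, -⟩
          exact ⟨ball_subset_closedBall hp.1, circleMap_mem_sphere _ hs.le _⟩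
    · -- differentiability in p of the integrand, for each fixed θ
      intro θ
      refine DifferentiableOn.const_smul ?_ _
      refine DifferentiableOn.smul ?_ ?_
      · refine DifferentiableOn.inv ?_ ?_
        · exact (differentiable_const _).differentiableOn.sub differentiable_snd.differentiableOn
        · rintro p ⟨-, hp2'⟩
          rw [mem_ball_iff_norm] at hp2'
          have hcm : circleMap p₀.2 s θ ∈ sphere p₀.2 s := circleMap_mem_sphere _ hs.le _
          rw [mem_sphere_iff_norm] at hcm
          intro h0
          rw [sub_eq_zero] at h0
          rw [h0] at hcm
          rw [hcm] at hp2'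
          exact lt_irrefl _ hp2'
      · -- p ↦ W p.1 η is differentiable on V
        set η := circleMap p₀.2 s θ with hηdef
        have hηs : η ∈ sphere p₀.2 s := circleMap_mem_sphere _ hs.le _
        have hinner := holoParam (E := E) hVopen
          (f := fun p θ' => deriv (circleMap p₀.1 t) θ' •
            ((circleMap p₀.1 t θ' - p.1)⁻¹ • F (circleMap p₀.1 t θ', η))) ?_ ?_
        · have heqW : (fun p : ℂ × ℂ => W p.1 η) = fun p => (2 * ↑π * Complex.I)⁻¹ •
              ∫ θ' in (0:ℝ)..(2*π), deriv (circleMap p₀.1 t) θ' •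
                ((circleMap p₀.1 t θ' - p.1)⁻¹ • F (circleMap p₀.1 t θ', η)) := rfl
          rw [heqW]
          exact hinner.const_smul _
        · refine ContinuousOn.smul ?_ (ContinuousOn.smul ?_ ?_)
          · simp only [deriv_circleMap]
            exact (((continuous_circleMap 0 t).comp continuous_snd).mul
              continuous_const).continuousOn
          · refine ContinuousOn.inv₀ ?_ ?_
            · exact (((continuous_circleMap _ _).comp continuous_snd).sub
                continuous_fst.fst).continuousOn
            · rintro ⟨p, θ'⟩ ⟨hp, -⟩
              have hp1' : p.1 ∈ ball p₀.1 (t/2) := hp.1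
              rw [mem_ball_iff_norm] at hp1'
              have hcm : circleMap p₀.1 t θ' ∈ sphere p₀.1 t := circleMap_mem_sphere _ ht.le _
              rw [mem_sphere_iff_norm] at hcm
              intro h0
              rw [sub_eq_zero] at h0
              rw [h0] at hcm
              rw [hcm] at hp1'
              linarith
          · refine ContinuousOn.comp (f := fun q : (ℂ × ℂ) × ℝ =>
              ((circleMap p₀.1 t q.2, η) : ℂ × ℂ)) hFc ?_ ?_
            · exact (((continuous_circleMap _ _).comp continuous_snd).prodMk
                continuous_const).continuousOn
            · rintro ⟨p, θ'⟩ ⟨-, -⟩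
              exact ⟨ball_subset_closedBall (hζmem _ (sphere_subset_closedBall
                (circleMap_mem_sphere _ ht.le _))), hηmem' _ (sphere_subset_closedBall hηs)⟩
        · intro θ'
          refine DifferentiableOn.const_smul ?_ _
          refine DifferentiableOn.smul ?_ (differentiable_const _).differentiableOn
          refine DifferentiableOn.inv ?_ ?_
          · exact (differentiable_const _).differentiableOn.sub
              differentiable_fst.differentiableOn
          · rintro p ⟨hp1', -⟩
            rw [mem_ball_iff_norm] at hp1'
            have hcm : circleMap p₀.1 t θ' ∈ sphere p₀.1 t := circleMap_mem_sphere _ ht.le _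
            rw [mem_sphere_iff_norm] at hcm
            intro h0
            rw [sub_eq_zero] at h0
            rw [h0] at hcm
            rw [hcm] at hp1'
            linarith
  -- conclude
  have hVsub : V ⊆ ball p₀.1 t ×ˢ ball p₀.2 s :=
    prod_mono (ball_subset_ball (by linarith)) (subset_refl _)
  have hFdiff : DifferentiableAt ℂ F p₀ := by
    have h1 : DifferentiableAt ℂ Frep p₀ :=
      (hFrepdiff p₀ hp₀V).differentiableAt (hVopen.mem_nhds hp₀V)
    refine h1.congr_of_eventuallyEq ?_
    filter_upwards [hVopen.mem_nhds hp₀V] with p hp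
    exact (hFrepeq p (hVsub hp)).symm
  exact hFdiff.differentiableWithinAt

end Joint

section Glue

variable {E : Type*} [NormedAddCommGroup E] [NormedSpace ℂ E] [CompleteSpace E]

lemma glueG (F : ℂ × ℂ → E)
    (hFc : ContinuousOn F (closedBall 0 1 ×ˢ (closedBall 0 1 \ {0})))
    (hFw : ∀ z ∈ closedBall (0:ℂ) 1,
      DifferentiableOn ℂ (fun w => F (z, w)) (ball 0 1 \ {0}))
    (hFz : ∀ w ∈ closedBall (0:ℂ) 1 \ {0},
      DifferentiableOn ℂ (fun z => F (z, w)) (ball 0 1))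
    (K : ℕ) (N : ℂ × ℂ → E)
    (hNc : ContinuousOn N (closedBall 0 1 ×ˢ closedBall 0 (1/2)))
    (hNd : DifferentiableOn ℂ N (ball 0 1 ×ˢ ball 0 (1/2)))
    (hNeq : ∀ p : ℂ × ℂ, p.1 ∈ closedBall (0:ℂ) 1 → ‖p.2‖ < 1/2 → p.2 ≠ 0 →
      F (p.1 * p.2^K, p.2) = N p) :
    ∃ G : ℂ × ℂ → E,
      ContinuousOn G (closedBall 0 1 ×ˢ closedBall 0 1) ∧
      DifferentiableOn ℂ G (ball 0 1 ×ˢ ball 0 1) ∧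
      ∀ p ∈ (closedBall (0:ℂ) 1) ×ˢ (closedBall (0:ℂ) 1), p.2 ≠ 0 →
        G p = F (p.1 * p.2 ^ K, p.2) := by
  have hmul_mem : ∀ p : ℂ × ℂ, p.1 ∈ closedBall (0:ℂ) 1 → p.2 ∈ closedBall (0:ℂ) 1 →
      p.1 * p.2^K ∈ closedBall (0:ℂ) 1 := by
    intro p h1 h2
    rw [mem_closedBall_zero_iff] at h1 h2 ⊢
    rw [norm_mul, norm_pow]
    exact mul_le_one₀ h1 (by positivity) (pow_le_one₀ (norm_nonneg _) h2)
  have hmul_mem_ball : ∀ p : ℂ × ℂ, p.1 ∈ ball (0:ℂ) 1 → p.2 ∈ ball (0:ℂ) 1 →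
      p.1 * p.2^K ∈ ball (0:ℂ) 1 := by
    intro p h1 h2
    rw [mem_ball_zero_iff] at h1 h2 ⊢
    rw [norm_mul, norm_pow]
    calc ‖p.1‖ * ‖p.2‖^K ≤ ‖p.1‖ * 1 :=
        mul_le_mul_of_nonneg_left (pow_le_one₀ (norm_nonneg _) h2.le) (norm_nonneg _)
      _ < 1 := by rwa [mul_one]
  set m : ℂ × ℂ → ℂ × ℂ := fun p => (p.1 * p.2^K, p.2) with hmdef
  have hmcont : Continuous m := (continuous_fst.mul (continuous_snd.pow K)).prodMk continuous_snd
  have hmdiff : Differentiable ℂ m := (differentiable_fst.mul (differentiable_snd.pow K)).prodMk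
    differentiable_snd
  set FF : ℂ × ℂ → E := fun p => F (m p) with hFFdef
  have hFFc : ContinuousOn FF ((closedBall 0 1 ×ˢ closedBall 0 1) ∩ {p : ℂ × ℂ | p.2 ≠ 0}) := by
    refine hFc.comp hmcont.continuousOn ?_
    rintro p ⟨hp, hne⟩
    exact ⟨hmul_mem p hp.1 hp.2, hp.2, hne⟩
  have hFjoint := joint_holo hFc hFw hFz
  have hFFdiff : ∀ p₀ : ℂ × ℂ, p₀ ∈ ball (0:ℂ) 1 ×ˢ ball (0:ℂ) 1 → p₀.2 ≠ 0 →
      DifferentiableAt ℂ FF p₀ := by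
    intro p₀ hp₀ hne
    have hm : m p₀ ∈ ball (0:ℂ) 1 ×ˢ (ball (0:ℂ) 1 \ {0}) :=
      ⟨hmul_mem_ball p₀ hp₀.1 hp₀.2, hp₀.2, hne⟩
    have hopen : IsOpen (ball (0:ℂ) 1 ×ˢ (ball (0:ℂ) 1 \ {0})) :=
      isOpen_ball.prod (isOpen_ball.sdiff isClosed_singleton)
    exact ((hFjoint _ hm).differentiableAt (hopen.mem_nhds hm)).comp p₀ (hmdiff p₀)
  refine ⟨fun p => if p.2 = 0 then N p else F (p.1 * p.2^K, p.2), ?_, ?_, ?_⟩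
  · -- continuity on the closed bidisc
    rintro p₀ hp₀
    rw [mem_prod] at hp₀
    by_cases hz : p₀.2 = 0
    · have hW : {p : ℂ × ℂ | ‖p.2‖ < 1/2} ∈ 𝓝 p₀ := by
        refine (isOpen_lt continuous_snd.norm continuous_const).mem_nhds ?_
        simp [hz]
      rw [← continuousWithinAt_inter' (mem_nhdsWithin_of_mem_nhds hW)]
      refine ContinuousWithinAt.congr (f := N) ?_ ?_ ?_
      · refine (hNc.mono ?_).continuousWithinAt ?_
        · rintro p ⟨hp, hp2⟩
          rw [mem_prod] at hp
          exact ⟨hp.1, mem_closedBall_zero_iff.2 hp2.le⟩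
        · exact ⟨⟨hp₀.1, mem_closedBall_zero_iff.2 (by simp [hz])⟩, by simp [hz]⟩
      · rintro p ⟨hp, hp2⟩
        rw [mem_prod] at hp
        by_cases hpz : p.2 = 0
        · simp only [if_pos hpz]
        · simp only [if_neg hpz]
          exact hNeq p hp.1 hp2 hpz
      · simp only [if_pos hz]
    · have hU : {p : ℂ × ℂ | p.2 ≠ 0} ∈ 𝓝 p₀ := by
        refine (isOpen_compl_singleton.preimage continuous_snd).mem_nhds hz
      rw [← continuousWithinAt_inter' (mem_nhdsWithin_of_mem_nhds hU)]
      refine ContinuousWithinAt.congr (f := FF) ?_ ?_ ?_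
      · refine hFFc.continuousWithinAt ⟨mem_prod.2 hp₀, hz⟩
      · rintro p ⟨-, hp2⟩
        simp only [if_neg hp2, hFFdef, hmdef]
      · simp only [if_neg hz, hFFdef, hmdef]
  · -- differentiability on the open bidisc
    rintro p₀ hp₀
    rw [mem_prod] at hp₀
    by_cases hz : p₀.2 = 0
    · have hmemO : p₀ ∈ ball (0:ℂ) 1 ×ˢ ball (0:ℂ) (1/2) :=
        ⟨hp₀.1, by rw [mem_ball_zero_iff, hz, norm_zero]; norm_num⟩
      have hopenO : IsOpen (ball (0:ℂ) 1 ×ˢ ball (0:ℂ) (1/2)) := isOpen_ball.prod isOpen_ball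
      have hNdiff : DifferentiableAt ℂ N p₀ :=
        (hNd p₀ hmemO).differentiableAt (hopenO.mem_nhds hmemO)
      refine (hNdiff.congr_of_eventuallyEq ?_).differentiableWithinAt
      filter_upwards [hopenO.mem_nhds hmemO] with p hp
      by_cases hpz : p.2 = 0
      · simp only [if_pos hpz]
      · simp only [if_neg hpz]
        exact hNeq p (ball_subset_closedBall hp.1) (mem_ball_zero_iff.1 hp.2) hpz
    · have hU : {p : ℂ × ℂ | p.2 ≠ 0} ∈ 𝓝 p₀ :=
        (isOpen_compl_singleton.preimage continuous_snd).mem_nhds hz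
      refine (DifferentiableAt.congr_of_eventuallyEq
        (hFFdiff p₀ (mem_prod.2 hp₀) hz) ?_).differentiableWithinAt
      filter_upwards [hU] with p hp2
      simp only [if_neg hp2, hFFdef, hmdef]
  · rintro p hp hne
    simp only [if_neg hne]

end Glue

section Branch0

variable {E : Type*} [NormedAddCommGroup E] [NormedSpace ℂ E] [CompleteSpace E]

lemma branch0 (F : ℂ × ℂ → E) (h : ℂ → E)
    (hhc : ContinuousOn h (closedBall 0 1)) (hhd : DifferentiableOn ℂ h (ball 0 1))
    (hFc : ContinuousOn F (closedBall 0 1 ×ˢ (closedBall 0 1 \ {0})))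
    (hFz : ∀ w ∈ closedBall (0:ℂ) 1 \ {0},
      DifferentiableOn ℂ (fun z => F (z, w)) (ball 0 1))
    (hpole0 : ∀ z ∈ closedBall (0:ℂ) 1, ∃ g : ℂ → E,
      DifferentiableOn ℂ g (ball 0 1) ∧
      ∀ w ∈ ball (0:ℂ) 1 \ {0}, g w = F (z, w) - h w)
    (K : ℕ) :
    ∃ N : ℂ × ℂ → E,
      ContinuousOn N (closedBall 0 1 ×ˢ closedBall 0 (1/2)) ∧
      DifferentiableOn ℂ N (ball 0 1 ×ˢ ball 0 (1/2)) ∧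
      ∀ p : ℂ × ℂ, p.1 ∈ closedBall (0:ℂ) 1 → ‖p.2‖ < 1/2 → p.2 ≠ 0 →
        F (p.1 * p.2^K, p.2) = N p := by
  have hnorm_cm : ∀ θ : ℝ, ‖circleMap (0:ℂ) ((3:ℝ)/4) θ‖ = 3/4 := fun θ => by
    rw [norm_circleMap_zero]; norm_num
  have hsmemC : ∀ θ : ℝ, circleMap (0:ℂ) ((3:ℝ)/4) θ ∈ closedBall (0:ℂ) 1 \ {0} := fun θ => by
    constructor
    · rw [mem_closedBall_zero_iff, hnorm_cm]; norm_num
    · rw [mem_singleton_iff]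
      intro h0
      have := hnorm_cm θ
      rw [h0, norm_zero] at this
      norm_num at this
  have hsmemB : ∀ θ : ℝ, circleMap (0:ℂ) ((3:ℝ)/4) θ ∈ ball (0:ℂ) 1 \ {0} := fun θ => by
    refine ⟨?_, (hsmemC θ).2⟩
    rw [mem_ball_zero_iff, hnorm_cm]; norm_num
  have hsmemB' : ∀ η ∈ sphere (0:ℂ) ((3:ℝ)/4), η ∈ ball (0:ℂ) 1 \ {0} := by
    intro η hη
    rw [mem_sphere_zero_iff_norm] at hη
    constructor
    · rw [mem_ball_zero_iff, hη]; norm_num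
    · rw [mem_singleton_iff]; intro h0; rw [h0, norm_zero] at hη; norm_num at hη
  have hmul : ∀ p : ℂ × ℂ, p.1 ∈ closedBall (0:ℂ) 1 → ‖p.2‖ ≤ 1 →
      p.1 * p.2^K ∈ closedBall (0:ℂ) 1 := by
    intro p h1 h2
    rw [mem_closedBall_zero_iff] at h1 ⊢
    rw [norm_mul, norm_pow]
    exact mul_le_one₀ h1 (by positivity) (pow_le_one₀ (norm_nonneg _) h2)
  set D0 : ℂ × ℂ → E := fun p =>
    (2 * ↑π * Complex.I)⁻¹ • ∮ η in C(0, (3:ℝ)/4),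
      (η - p.2)⁻¹ • (F (p.1 * p.2^K, η) - h η) with hD0def
  -- the identity
  have hNeq : ∀ p : ℂ × ℂ, p.1 ∈ closedBall (0:ℂ) 1 → ‖p.2‖ < 1/2 → p.2 ≠ 0 →
      F (p.1 * p.2^K, p.2) = h p.2 + D0 p := by
    intro p hp1 hp2 hne
    have hy : p.1 * p.2^K ∈ closedBall (0:ℂ) 1 := hmul p hp1 (by linarith)
    obtain ⟨g, hgd, hgeq⟩ := hpole0 _ hy
    have hdc : DiffContOnCl ℂ g (ball (0:ℂ) ((3:ℝ)/4)) := by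
      refine ⟨hgd.mono (ball_subset_ball (by norm_num)), ?_⟩
      refine hgd.continuousOn.mono ?_
      rw [closure_ball (0:ℂ) (by norm_num : ((3:ℝ)/4) ≠ 0)]
      exact closedBall_subset_ball (by norm_num)
    have hcongr : (∮ η in C(0, (3:ℝ)/4), (η - p.2)⁻¹ • (F (p.1 * p.2^K, η) - h η))
        = ∮ η in C(0, (3:ℝ)/4), (η - p.2)⁻¹ • g η := by
      refine circleIntegral.integral_congr (by norm_num) fun η hη => ?_
      rw [hgeq η (hsmemB' η hη)]
    have hval : D0 p = F (p.1 * p.2^K, p.2) - h p.2 := by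
      show (2 * ↑π * Complex.I)⁻¹ • (∮ η in C(0, (3:ℝ)/4),
        (η - p.2)⁻¹ • (F (p.1 * p.2^K, η) - h η)) = _
      rw [hcongr, hdc.circleIntegral_sub_inv_smul (by
        rw [mem_ball_zero_iff]; linarith), smul_smul,
        inv_mul_cancel₀ Complex.two_pi_I_ne_zero, one_smul]
      exact hgeq p.2 ⟨by rw [mem_ball_zero_iff]; linarith, hne⟩
    rw [hval]
    abel
  -- joint continuity of the integrand
  have hint_cont : ContinuousOn (fun q : (ℂ × ℂ) × ℝ =>
      deriv (circleMap 0 ((3:ℝ)/4)) q.2 • ((circleMap 0 ((3:ℝ)/4) q.2 - q.1.2)⁻¹ •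
        (F (q.1.1 * q.1.2^K, circleMap 0 ((3:ℝ)/4) q.2) - h (circleMap 0 ((3:ℝ)/4) q.2))))
      ((closedBall 0 1 ×ˢ closedBall 0 (1/2)) ×ˢ (univ : Set ℝ)) := by
    refine ContinuousOn.smul ?_ (ContinuousOn.smul ?_ (ContinuousOn.sub ?_ ?_))
    · simp only [deriv_circleMap]
      exact (((continuous_circleMap 0 _).comp continuous_snd).mul continuous_const).continuousOn
    · refine ContinuousOn.inv₀ ?_ ?_
      · exact (((continuous_circleMap _ _).comp continuous_snd).sub
          continuous_fst.snd).continuousOn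
      · rintro ⟨p, θ⟩ ⟨hp, -⟩
        rw [mem_prod] at hp
        have h2 : ‖p.2‖ ≤ 1/2 := mem_closedBall_zero_iff.1 hp.2
        intro h0
        rw [sub_eq_zero] at h0
        rw [← h0] at h2
        rw [hnorm_cm] at h2
        norm_num at h2
    · refine ContinuousOn.comp (f := fun q : (ℂ × ℂ) × ℝ =>
        ((q.1.1 * q.1.2^K, circleMap 0 ((3:ℝ)/4) q.2) : ℂ × ℂ)) hFc ?_ ?_
      · exact ((continuous_fst.fst.mul (continuous_fst.snd.pow K)).prodMk
          ((continuous_circleMap _ _).comp continuous_snd)).continuousOn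
      · rintro ⟨p, θ⟩ ⟨hp, -⟩
        rw [mem_prod] at hp
        exact ⟨hmul p hp.1 (by linarith [mem_closedBall_zero_iff.1 hp.2]), hsmemC θ⟩
    · refine ContinuousOn.comp (f := fun q : (ℂ × ℂ) × ℝ => circleMap 0 ((3:ℝ)/4) q.2)
        hhc ?_ ?_
      · exact ((continuous_circleMap _ _).comp continuous_snd).continuousOn
      · exact fun q _ => (hsmemC q.2).1
  -- continuity of D0
  have hD0cont : ContinuousOn D0 (closedBall 0 1 ×ˢ closedBall 0 (1/2)) := by
    have hint := contParamOn (X := ℂ × ℂ) (s := closedBall 0 1 ×ˢ closedBall 0 (1/2))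
      ((isClosed_closedBall).prod (isClosed_closedBall))
      (f := fun p θ => deriv (circleMap 0 ((3:ℝ)/4)) θ • ((circleMap 0 ((3:ℝ)/4) θ - p.2)⁻¹ •
        (F (p.1 * p.2^K, circleMap 0 ((3:ℝ)/4) θ) - h (circleMap 0 ((3:ℝ)/4) θ)))) hint_cont
    exact hint.const_smul _
  -- differentiability of D0
  have hD0diff : DifferentiableOn ℂ D0 (ball 0 1 ×ˢ ball 0 (1/2)) := by
    have hmain := holoParam (E := E) (isOpen_ball.prod isOpen_ball)
      (f := fun p θ => deriv (circleMap 0 ((3:ℝ)/4)) θ • ((circleMap 0 ((3:ℝ)/4) θ - p.2)⁻¹ •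
        (F (p.1 * p.2^K, circleMap 0 ((3:ℝ)/4) θ) - h (circleMap 0 ((3:ℝ)/4) θ))))
      (hint_cont.mono (prod_mono (prod_mono ball_subset_closedBall ball_subset_closedBall)
        (subset_refl _))) ?_
    · exact hmain.const_smul _
    · intro θ
      refine DifferentiableOn.const_smul ?_ _
      refine DifferentiableOn.smul ?_ ?_
      · refine DifferentiableOn.inv ?_ ?_
        · exact (differentiable_const _).differentiableOn.sub differentiable_snd.differentiableOn
        · rintro p ⟨-, hp2⟩
          rw [mem_ball_zero_iff] at hp2
          intro h0
          rw [sub_eq_zero] at h0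
          have := hnorm_cm θ
          rw [h0] at this
          rw [this] at hp2
          norm_num at hp2
      · refine DifferentiableOn.sub ?_ (differentiableOn_const _)
        have hcomp := DifferentiableOn.comp
          (g := fun z : ℂ => F (z, circleMap 0 ((3:ℝ)/4) θ))
          (f := fun p : ℂ × ℂ => p.1 * p.2 ^ K) (t := ball (0:ℂ) 1)
          (s := ball (0:ℂ) 1 ×ˢ ball (0:ℂ) (1/2)) (hFz _ (hsmemC θ))
          ((differentiable_fst.mul (differentiable_snd.pow K)).differentiableOn) ?_
        · exact hcomp
        · rintro p ⟨hp1, hp2⟩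
          rw [mem_ball_zero_iff] at hp1 hp2 ⊢
          rw [norm_mul, norm_pow]
          calc ‖p.1‖ * ‖p.2‖^K ≤ ‖p.1‖ * 1 :=
              mul_le_mul_of_nonneg_left (pow_le_one₀ (norm_nonneg _) (by linarith)) (norm_nonneg _)
            _ < 1 := by rwa [mul_one]
  refine ⟨fun p => h p.2 + D0 p, ?_, ?_, hNeq⟩
  · refine ContinuousOn.add ?_ hD0cont
    refine ContinuousOn.comp (f := fun p : ℂ × ℂ => p.2) hhc continuous_snd.continuousOn ?_
    rintro p hp
    rw [mem_prod] at hp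
    exact closedBall_subset_closedBall (by norm_num) hp.2
  · refine DifferentiableOn.add ?_ hD0diff
    have hcomp := DifferentiableOn.comp (g := h) (f := fun p : ℂ × ℂ => p.2)
      (t := ball (0:ℂ) 1) (s := ball (0:ℂ) 1 ×ˢ ball (0:ℂ) (1/2)) hhd
      differentiable_snd.differentiableOn ?_
    · exact hcomp
    · rintro p ⟨-, hp2⟩
      exact ball_subset_ball (by norm_num) hp2

end Branch0

section Branch1

variable {E : Type*} [NormedAddCommGroup E] [NormedSpace ℂ E] [CompleteSpace E]

lemma branch1 (F : ℂ × ℂ → E) (h : ℂ → E) (j : ℕ)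
    (hhc : ContinuousOn h (closedBall 0 1)) (hhd : DifferentiableOn ℂ h (ball 0 1))
    (hFc : ContinuousOn F (closedBall 0 1 ×ˢ (closedBall 0 1 \ {0})))
    (hFz : ∀ w ∈ closedBall (0:ℂ) 1 \ {0},
      DifferentiableOn ℂ (fun z => F (z, w)) (ball 0 1))
    (hF0 : ∀ w ∈ closedBall (0:ℂ) 1 \ {0}, F (0, w) = h w)
    (hpole : ∀ z ∈ closedBall (0:ℂ) 1, ∃ g : ℂ → E,
      DifferentiableOn ℂ g (ball 0 1) ∧
      ∀ w ∈ ball (0:ℂ) 1 \ {0}, g w = w ^ j • (F (z, w) - h w))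
    (K : ℕ) (hK : 1 ≤ K) (hjK : j ≤ K) :
    ∃ N : ℂ × ℂ → E,
      ContinuousOn N (closedBall 0 1 ×ˢ closedBall 0 (1/2)) ∧
      DifferentiableOn ℂ N (ball 0 1 ×ˢ ball 0 (1/2)) ∧
      ∀ p : ℂ × ℂ, p.1 ∈ closedBall (0:ℂ) 1 → ‖p.2‖ < 1/2 → p.2 ≠ 0 →
        F (p.1 * p.2^K, p.2) = N p := by
  have hnorm_cm : ∀ θ : ℝ, ‖circleMap (0:ℂ) ((3:ℝ)/4) θ‖ = 3/4 := fun θ => by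
    rw [norm_circleMap_zero]; norm_num
  have hsmemC : ∀ θ : ℝ, circleMap (0:ℂ) ((3:ℝ)/4) θ ∈ closedBall (0:ℂ) 1 \ {0} := fun θ => by
    constructor
    · rw [mem_closedBall_zero_iff, hnorm_cm]; norm_num
    · rw [mem_singleton_iff]
      intro h0
      have := hnorm_cm θ
      rw [h0, norm_zero] at this
      norm_num at this
  have hsmemS : ∀ η ∈ sphere (0:ℂ) ((3:ℝ)/4), η ∈ closedBall (0:ℂ) 1 \ {0} := by
    intro η hη
    rw [mem_sphere_zero_iff_norm] at hη
    constructor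
    · rw [mem_closedBall_zero_iff, hη]; norm_num
    · rw [mem_singleton_iff]; intro h0; rw [h0, norm_zero] at hη; norm_num at hη
  have hsmemB' : ∀ η ∈ sphere (0:ℂ) ((3:ℝ)/4), η ∈ ball (0:ℂ) 1 \ {0} := by
    intro η hη
    rw [mem_sphere_zero_iff_norm] at hη
    constructor
    · rw [mem_ball_zero_iff, hη]; norm_num
    · rw [mem_singleton_iff]; intro h0; rw [h0, norm_zero] at hη; norm_num at hη
  have hyb : ∀ p : ℂ × ℂ, ‖p.1‖ ≤ 1 → ‖p.2‖ ≤ 1/2 → ‖p.1 * p.2^K‖ ≤ 1/2 := by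
    intro p h1 h2
    rw [norm_mul, norm_pow]
    have hK' : ‖p.2‖^K ≤ ‖p.2‖^1 :=
      pow_le_pow_of_le_one (norm_nonneg _) (by linarith) hK
    rw [pow_one] at hK'
    calc ‖p.1‖ * ‖p.2‖^K ≤ 1 * ‖p.2‖^K :=
        mul_le_mul_of_nonneg_right h1 (by positivity)
      _ = ‖p.2‖^K := one_mul _
      _ ≤ 1/2 := le_trans hK' h2
  -- the vanishing-corrected Cauchy transform
  set ψ : ℂ → ℂ → E := fun y η =>
    (2 * ↑π * Complex.I)⁻¹ • ∮ ζ in C(0, (3:ℝ)/4),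
      (ζ⁻¹ * (ζ - y)⁻¹) • (η^j • (F (ζ, η) - h η)) with hψdef
  -- I2 : evaluation of ψ
  have hψeq : ∀ y : ℂ, ‖y‖ < 3/4 → y ≠ 0 → ∀ η ∈ closedBall (0:ℂ) 1 \ {0},
      ψ y η = y⁻¹ • (η^j • (F (y, η) - h η)) := by
    intro y hy hyne η hη
    set Φ : ℂ → E := fun ζ => η^j • (F (ζ, η) - h η) with hΦdef
    have hΦc : ContinuousOn Φ (closedBall (0:ℂ) ((3:ℝ)/4)) := by
      refine ContinuousOn.const_smul (ContinuousOn.sub ?_ continuousOn_const) _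
      refine ContinuousOn.comp (f := fun ζ : ℂ => ((ζ, η) : ℂ × ℂ)) hFc
        ((continuous_id.prodMk continuous_const).continuousOn) ?_
      intro ζ hζ
      exact ⟨closedBall_subset_closedBall (by norm_num) hζ, hη⟩
    have hΦd : DifferentiableOn ℂ Φ (ball (0:ℂ) 1) :=
      ((hFz η hη).sub (differentiableOn_const _)).const_smul _
    have hΦdc : DiffContOnCl ℂ Φ (ball (0:ℂ) ((3:ℝ)/4)) := by
      refine ⟨hΦd.mono (ball_subset_ball (by norm_num)), ?_⟩
      rw [closure_ball (0:ℂ) (by norm_num : ((3:ℝ)/4) ≠ 0)]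
      exact hΦc
    have hΦ0 : Φ 0 = 0 := by
      rw [hΦdef]
      simp only [hF0 η hη, sub_self, smul_zero]
    have hsphne : ∀ ζ ∈ sphere (0:ℂ) ((3:ℝ)/4), ζ ≠ 0 ∧ ζ - y ≠ 0 := by
      intro ζ hζ
      rw [mem_sphere_zero_iff_norm] at hζ
      constructor
      · intro h0; rw [h0, norm_zero] at hζ; norm_num at hζ
      · intro h0
        rw [sub_eq_zero] at h0
        rw [h0] at hζ
        rw [hζ] at hy
        linarith
    have hi1 : CircleIntegrable (fun ζ => (ζ - y)⁻¹ • Φ ζ) 0 ((3:ℝ)/4) := by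
      refine ContinuousOn.circleIntegrable (by norm_num) ?_
      refine ContinuousOn.smul (ContinuousOn.inv₀
        ((continuousOn_id.sub continuousOn_const)) (fun ζ hζ => (hsphne ζ hζ).2)) ?_
      exact hΦc.mono sphere_subset_closedBall
    have hi2 : CircleIntegrable (fun ζ => ζ⁻¹ • Φ ζ) 0 ((3:ℝ)/4) := by
      refine ContinuousOn.circleIntegrable (by norm_num) ?_
      refine ContinuousOn.smul (ContinuousOn.inv₀ continuousOn_id
        (fun ζ hζ => (hsphne ζ hζ).1)) ?_
      exact hΦc.mono sphere_subset_closedBall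
    have hC1 : (∮ ζ in C(0, (3:ℝ)/4), (ζ - y)⁻¹ • Φ ζ) = (2 * ↑π * Complex.I) • Φ y :=
      hΦdc.circleIntegral_sub_inv_smul (mem_ball_zero_iff.2 hy)
    have hC0 : (∮ ζ in C(0, (3:ℝ)/4), ζ⁻¹ • Φ ζ) = 0 := by
      have h0' : (∮ ζ in C(0, (3:ℝ)/4), (ζ - 0)⁻¹ • Φ ζ) = (2 * ↑π * Complex.I) • Φ 0 :=
        hΦdc.circleIntegral_sub_inv_smul (mem_ball_self (by norm_num))
      rw [hΦ0, smul_zero] at h0'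
      rw [← h0']
      refine circleIntegral.integral_congr (by norm_num) fun ζ _ => ?_
      rw [sub_zero]
    have hpt : EqOn (fun ζ => (ζ⁻¹ * (ζ - y)⁻¹) • Φ ζ)
        (fun ζ => y⁻¹ • ((ζ - y)⁻¹ • Φ ζ - ζ⁻¹ • Φ ζ)) (sphere (0:ℂ) ((3:ℝ)/4)) := by
      intro ζ hζ
      obtain ⟨hζ0, hζy⟩ := hsphne ζ hζ
      simp only
      have hsc : ζ⁻¹ * (ζ - y)⁻¹ = y⁻¹ * ((ζ - y)⁻¹ - ζ⁻¹) := by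
        field_simp
        ring
      rw [hsc, ← smul_smul, sub_smul]
    show (2 * ↑π * Complex.I)⁻¹ • (∮ ζ in C(0, (3:ℝ)/4), (ζ⁻¹ * (ζ - y)⁻¹) • Φ ζ)
      = y⁻¹ • Φ y
    rw [circleIntegral.integral_congr (by norm_num) hpt, circleIntegral.integral_smul,
      circleIntegral.integral_sub hi1 hi2, hC1, hC0, sub_zero, smul_smul, smul_smul]
    congr 1
    field_simp
  -- joint continuity of ψ
  have hψcont : ContinuousOn (fun q : ℂ × ℂ => ψ q.1 q.2)
      (closedBall (0:ℂ) (5/8) ×ˢ sphere (0:ℂ) ((3:ℝ)/4)) := by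
    have hint := contParamOn (X := ℂ × ℂ)
      (s := closedBall (0:ℂ) (5/8) ×ˢ sphere (0:ℂ) ((3:ℝ)/4))
      ((isClosed_closedBall).prod (isClosed_sphere))
      (f := fun q θ => deriv (circleMap 0 ((3:ℝ)/4)) θ •
        (((circleMap 0 ((3:ℝ)/4) θ)⁻¹ * (circleMap 0 ((3:ℝ)/4) θ - q.1)⁻¹) •
          (q.2^j • (F (circleMap 0 ((3:ℝ)/4) θ, q.2) - h q.2)))) ?_
    · exact hint.const_smul _
    · refine ContinuousOn.smul ?_ (ContinuousOn.smul (ContinuousOn.mul ?_ ?_)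
        (ContinuousOn.smul ?_ (ContinuousOn.sub ?_ ?_)))
      · simp only [deriv_circleMap]
        exact (((continuous_circleMap 0 _).comp continuous_snd).mul continuous_const).continuousOn
      · refine ContinuousOn.inv₀
          ((continuous_circleMap _ _).comp continuous_snd).continuousOn ?_
        rintro ⟨q, θ⟩ -
        intro h0
        have := hnorm_cm θ
        rw [h0, norm_zero] at this
        norm_num at this
      · refine ContinuousOn.inv₀ (((continuous_circleMap _ _).comp continuous_snd).sub
          continuous_fst.fst).continuousOn ?_
        rintro ⟨q, θ⟩ ⟨hq, -⟩
        rw [mem_prod] at hq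
        have h1 : ‖q.1‖ ≤ 5/8 := mem_closedBall_zero_iff.1 hq.1
        intro h0
        rw [sub_eq_zero] at h0
        rw [← h0] at h1
        rw [hnorm_cm] at h1
        norm_num at h1
      · exact (continuous_fst.snd.pow j).continuousOn
      · refine ContinuousOn.comp (f := fun q : (ℂ × ℂ) × ℝ =>
          ((circleMap 0 ((3:ℝ)/4) q.2, q.1.2) : ℂ × ℂ)) hFc ?_ ?_
        · exact (((continuous_circleMap _ _).comp continuous_snd).prodMk
            continuous_fst.snd).continuousOn
        · rintro ⟨q, θ⟩ ⟨hq, -⟩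
          rw [mem_prod] at hq
          exact ⟨(hsmemC θ).1, hsmemS _ hq.2⟩
      · refine ContinuousOn.comp (f := fun q : (ℂ × ℂ) × ℝ => q.1.2) hhc
          continuous_fst.snd.continuousOn ?_
        rintro ⟨q, θ⟩ ⟨hq, -⟩
        rw [mem_prod] at hq
        exact (hsmemS _ hq.2).1
  -- differentiability of ψ in the first variable
  have hψdiff : ∀ η ∈ closedBall (0:ℂ) 1 \ {0},
      DifferentiableOn ℂ (fun y => ψ y η) (ball (0:ℂ) (5/8)) := by
    intro η hη
    have hmain := holoParam (E := E) (isOpen_ball.prod isOpen_ball)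
      (V := ball (0:ℂ) (5/8) ×ˢ ball (0:ℂ) 1)
      (f := fun q θ => deriv (circleMap 0 ((3:ℝ)/4)) θ •
        (((circleMap 0 ((3:ℝ)/4) θ)⁻¹ * (circleMap 0 ((3:ℝ)/4) θ - q.1)⁻¹) •
          (η^j • (F (circleMap 0 ((3:ℝ)/4) θ, η) - h η)))) ?_ ?_
    · have hq : DifferentiableOn ℂ (fun q : ℂ × ℂ => ψ q.1 η)
          (ball (0:ℂ) (5/8) ×ˢ ball (0:ℂ) 1) := hmain.const_smul _
      have hcomp := DifferentiableOn.comp (g := fun q : ℂ × ℂ => ψ q.1 η)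
        (f := fun y : ℂ => ((y, 0) : ℂ × ℂ)) (t := ball (0:ℂ) (5/8) ×ˢ ball (0:ℂ) 1)
        (s := ball (0:ℂ) (5/8)) hq
        ((differentiable_id.prodMk (differentiable_const _)).differentiableOn) ?_
      · exact hcomp
      · intro y hy
        exact ⟨hy, mem_ball_zero_iff.2 (by rw [norm_zero]; norm_num)⟩
    · -- continuity
      refine ContinuousOn.smul ?_ (ContinuousOn.smul (ContinuousOn.mul ?_ ?_) ?_)
      · simp only [deriv_circleMap]
        exact (((continuous_circleMap 0 _).comp continuous_snd).mul continuous_const).continuousOn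
      · refine ContinuousOn.inv₀
          ((continuous_circleMap _ _).comp continuous_snd).continuousOn ?_
        rintro ⟨q, θ⟩ -
        intro h0
        have := hnorm_cm θ
        rw [h0, norm_zero] at this
        norm_num at this
      · refine ContinuousOn.inv₀ (((continuous_circleMap _ _).comp continuous_snd).sub
          continuous_fst.fst).continuousOn ?_
        rintro ⟨q, θ⟩ ⟨hq, -⟩
        rw [mem_prod] at hq
        have h1 : ‖q.1‖ < 5/8 := mem_ball_zero_iff.1 hq.1
        intro h0
        rw [sub_eq_zero] at h0
        rw [← h0] at h1
        rw [hnorm_cm] at h1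
        norm_num at h1
      · refine ContinuousOn.const_smul (ContinuousOn.sub ?_ continuousOn_const) _
        refine ContinuousOn.comp (f := fun q : (ℂ × ℂ) × ℝ =>
          ((circleMap 0 ((3:ℝ)/4) q.2, η) : ℂ × ℂ)) hFc ?_ ?_
        · exact (((continuous_circleMap _ _).comp continuous_snd).prodMk
            continuous_const).continuousOn
        · rintro ⟨q, θ⟩ -
          exact ⟨(hsmemC θ).1, hη⟩
    · -- differentiability for fixed θ
      intro θ
      refine DifferentiableOn.const_smul ?_ _
      refine DifferentiableOn.smul_const ?_ _
      refine DifferentiableOn.mul (differentiableOn_const _) ?_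
      refine DifferentiableOn.inv
        ((differentiableOn_const _).sub differentiable_fst.differentiableOn) ?_
      rintro q ⟨hq1, -⟩
      rw [mem_ball_zero_iff] at hq1
      intro h0
      rw [sub_eq_zero] at h0
      have := hnorm_cm θ
      rw [h0] at this
      rw [this] at hq1
      norm_num at hq1
  -- the outer transform
  set D : ℂ × ℂ → E := fun p =>
    (2 * ↑π * Complex.I)⁻¹ • ∮ η in C(0, (3:ℝ)/4),
      (η - p.2)⁻¹ • ψ (p.1 * p.2^K) η with hDdef
  -- the key identity
  have hNeq : ∀ p : ℂ × ℂ, p.1 ∈ closedBall (0:ℂ) 1 → ‖p.2‖ < 1/2 → p.2 ≠ 0 →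
      F (p.1 * p.2^K, p.2) = h p.2 + (p.1 * p.2^(K - j)) • D p := by
    intro p hp1 hp2 hne
    have hp1' : ‖p.1‖ ≤ 1 := mem_closedBall_zero_iff.1 hp1
    by_cases hp10 : p.1 = 0
    · rw [hp10, zero_mul, zero_mul, zero_smul, add_zero]
      exact hF0 p.2 ⟨mem_closedBall_zero_iff.2 (by linarith), hne⟩
    · set y : ℂ := p.1 * p.2^K with hydef
      have hyne : y ≠ 0 := mul_ne_zero hp10 (pow_ne_zero _ hne)
      have hynorm : ‖y‖ ≤ 1/2 := hyb p hp1' (by linarith)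
      obtain ⟨g, hgd, hgeq⟩ := hpole y (mem_closedBall_zero_iff.2 (by linarith))
      have hgdc : DiffContOnCl ℂ g (ball (0:ℂ) ((3:ℝ)/4)) := by
        refine ⟨hgd.mono (ball_subset_ball (by norm_num)), ?_⟩
        refine hgd.continuousOn.mono ?_
        rw [closure_ball (0:ℂ) (by norm_num : ((3:ℝ)/4) ≠ 0)]
        exact closedBall_subset_ball (by norm_num)
      have hcongr : (∮ η in C(0, (3:ℝ)/4), (η - p.2)⁻¹ • ψ (p.1 * p.2^K) η)
          = ∮ η in C(0, (3:ℝ)/4), y⁻¹ • ((η - p.2)⁻¹ • g η) := by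
        refine circleIntegral.integral_congr (by norm_num) fun η hη => ?_
        have h1 : ψ y η = y⁻¹ • (η^j • (F (y, η) - h η)) :=
          hψeq y (by linarith) hyne η (hsmemS η hη)
        have h2 : g η = η^j • (F (y, η) - h η) := hgeq η (hsmemB' η hη)
        rw [← hydef, h1, ← h2, smul_comm]
      have hDval : D p = (y⁻¹ * p.2^j) • (F (y, p.2) - h p.2) := by
        show (2 * ↑π * Complex.I)⁻¹ • (∮ η in C(0, (3:ℝ)/4),
          (η - p.2)⁻¹ • ψ (p.1 * p.2^K) η) = _
        rw [hcongr, circleIntegral.integral_smul,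
          hgdc.circleIntegral_sub_inv_smul (by rw [mem_ball_zero_iff]; linarith),
          hgeq p.2 ⟨mem_ball_zero_iff.2 (by linarith), hne⟩,
          smul_comm ((2 * ↑π * Complex.I)⁻¹) (y⁻¹),
          smul_smul ((2 * ↑π * Complex.I)⁻¹) (2 * ↑π * Complex.I),
          inv_mul_cancel₀ Complex.two_pi_I_ne_zero, one_smul, smul_smul]
      rw [hDval, smul_smul]
      have hsc1 : (p.1 * p.2^(K - j)) * (y⁻¹ * p.2^j) = 1 := by
        rw [hydef, ← pow_sub_mul_pow p.2 hjK]
        field_simp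
      rw [hsc1, one_smul]
      abel
  -- joint continuity of the integrand of D
  have hint_cont : ContinuousOn (fun q : (ℂ × ℂ) × ℝ =>
      deriv (circleMap 0 ((3:ℝ)/4)) q.2 • ((circleMap 0 ((3:ℝ)/4) q.2 - q.1.2)⁻¹ •
        ψ (q.1.1 * q.1.2^K) (circleMap 0 ((3:ℝ)/4) q.2)))
      ((closedBall 0 1 ×ˢ closedBall 0 (1/2)) ×ˢ (univ : Set ℝ)) := by
    refine ContinuousOn.smul ?_ (ContinuousOn.smul ?_ ?_)
    · simp only [deriv_circleMap]
      exact (((continuous_circleMap 0 _).comp continuous_snd).mul continuous_const).continuousOn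
    · refine ContinuousOn.inv₀ (((continuous_circleMap _ _).comp continuous_snd).sub
        continuous_fst.snd).continuousOn ?_
      rintro ⟨q, θ⟩ ⟨hq, -⟩
      rw [mem_prod] at hq
      have h2 : ‖q.2‖ ≤ 1/2 := mem_closedBall_zero_iff.1 hq.2
      intro h0
      rw [sub_eq_zero] at h0
      rw [← h0] at h2
      rw [hnorm_cm] at h2
      norm_num at h2
    · refine ContinuousOn.comp (f := fun q : (ℂ × ℂ) × ℝ =>
        ((q.1.1 * q.1.2^K, circleMap 0 ((3:ℝ)/4) q.2) : ℂ × ℂ)) hψcont ?_ ?_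
      · exact ((continuous_fst.fst.mul (continuous_fst.snd.pow K)).prodMk
          ((continuous_circleMap _ _).comp continuous_snd)).continuousOn
      · rintro ⟨q, θ⟩ ⟨hq, -⟩
        rw [mem_prod] at hq
        refine ⟨?_, circleMap_mem_sphere _ (by norm_num) _⟩
        rw [mem_closedBall_zero_iff]
        have := hyb q (mem_closedBall_zero_iff.1 hq.1) (mem_closedBall_zero_iff.1 hq.2)
        linarith
  -- continuity of D
  have hDcont : ContinuousOn D (closedBall 0 1 ×ˢ closedBall 0 (1/2)) := by
    have hint := contParamOn (X := ℂ × ℂ) (s := closedBall 0 1 ×ˢ closedBall 0 (1/2))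
      ((isClosed_closedBall).prod (isClosed_closedBall))
      (f := fun p θ => deriv (circleMap 0 ((3:ℝ)/4)) θ • ((circleMap 0 ((3:ℝ)/4) θ - p.2)⁻¹ •
        ψ (p.1 * p.2^K) (circleMap 0 ((3:ℝ)/4) θ))) hint_cont
    exact hint.const_smul _
  -- differentiability of D
  have hDdiff : DifferentiableOn ℂ D (ball 0 1 ×ˢ ball 0 (1/2)) := by
    have hmain := holoParam (E := E) (isOpen_ball.prod isOpen_ball)
      (f := fun p θ => deriv (circleMap 0 ((3:ℝ)/4)) θ • ((circleMap 0 ((3:ℝ)/4) θ - p.2)⁻¹ •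
        ψ (p.1 * p.2^K) (circleMap 0 ((3:ℝ)/4) θ)))
      (hint_cont.mono (prod_mono (prod_mono ball_subset_closedBall ball_subset_closedBall)
        (subset_refl _))) ?_
    · exact hmain.const_smul _
    · intro θ
      refine DifferentiableOn.const_smul ?_ _
      refine DifferentiableOn.smul ?_ ?_
      · refine DifferentiableOn.inv
          ((differentiableOn_const _).sub differentiable_snd.differentiableOn) ?_
        rintro p ⟨-, hp2⟩
        rw [mem_ball_zero_iff] at hp2
        intro h0
        rw [sub_eq_zero] at h0
        have := hnorm_cm θ
        rw [h0] at this
        rw [this] at hp2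
        norm_num at hp2
      · have hcomp := DifferentiableOn.comp
          (g := fun y : ℂ => ψ y (circleMap 0 ((3:ℝ)/4) θ))
          (f := fun p : ℂ × ℂ => p.1 * p.2 ^ K) (t := ball (0:ℂ) (5/8))
          (s := ball (0:ℂ) 1 ×ˢ ball (0:ℂ) (1/2)) (hψdiff _ (hsmemC θ))
          ((differentiable_fst.mul (differentiable_snd.pow K)).differentiableOn) ?_
        · exact hcomp
        · rintro p ⟨hp1, hp2⟩
          rw [mem_ball_zero_iff] at hp1 hp2 ⊢
          have := hyb p hp1.le (by linarith)
          linarith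
  -- assemble N
  refine ⟨fun p => h p.2 + (p.1 * p.2^(K - j)) • D p, ?_, ?_, hNeq⟩
  · refine ContinuousOn.add ?_ ?_
    · refine ContinuousOn.comp (f := fun p : ℂ × ℂ => p.2) hhc continuous_snd.continuousOn ?_
      rintro p hp
      rw [mem_prod] at hp
      exact closedBall_subset_closedBall (by norm_num) hp.2
    · exact (continuous_fst.mul (continuous_snd.pow (K - j))).continuousOn.smul hDcont
  · refine DifferentiableOn.add ?_ ?_
    · have hcomp := DifferentiableOn.comp (g := h) (f := fun p : ℂ × ℂ => p.2)
        (t := ball (0:ℂ) 1) (s := ball (0:ℂ) 1 ×ˢ ball (0:ℂ) (1/2)) hhd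
        differentiable_snd.differentiableOn ?_
      · exact hcomp
      · rintro p ⟨-, hp2⟩
        exact ball_subset_ball (by norm_num) hp2
    · exact ((differentiable_fst.mul (differentiable_snd.pow (K - j))).differentiableOn).smul
        hDdiff

end Branch1

/-- if `F(z,·) − h` has a pole of order at most `j` at `w = 0` for each `z`,
and `F(0,w) = h(w)`, then for every `k ≥ j` the map `(z,w) ↦ F(z wᵏ, w)` extends
continuously to the closed bidisc, holomorphically on the open bidisc. -/
theorem stmt8 (n j : ℕ)
    (h : ℂ → EuclideanSpace ℂ (Fin n))
    (hhc : ContinuousOn h (closedBall 0 1)) (hhd : DifferentiableOn ℂ h (ball 0 1))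
    (F : ℂ × ℂ → EuclideanSpace ℂ (Fin n))
    (hFc : ContinuousOn F (closedBall 0 1 ×ˢ (closedBall 0 1 \ {0})))
    (hFw : ∀ z ∈ closedBall (0:ℂ) 1,
      DifferentiableOn ℂ (fun w => F (z, w)) (ball 0 1 \ {0}))
    (hFz : ∀ w ∈ closedBall (0:ℂ) 1 \ {0},
      DifferentiableOn ℂ (fun z => F (z, w)) (ball 0 1))
    (hpole : ∀ z ∈ closedBall (0:ℂ) 1, ∃ g : ℂ → EuclideanSpace ℂ (Fin n),
      DifferentiableOn ℂ g (ball 0 1) ∧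
      ∀ w ∈ ball (0:ℂ) 1 \ {0}, g w = w ^ j • (F (z, w) - h w))
    (hF0 : ∀ w ∈ closedBall (0:ℂ) 1 \ {0}, F (0, w) = h w)
    (k : ℤ) (hk : (j : ℤ) ≤ k) :
    ∃ G : ℂ × ℂ → EuclideanSpace ℂ (Fin n),
      ContinuousOn G (closedBall 0 1 ×ˢ closedBall 0 1) ∧
      DifferentiableOn ℂ G (ball 0 1 ×ˢ ball 0 1) ∧
      ∀ p ∈ (closedBall (0:ℂ) 1) ×ˢ (closedBall (0:ℂ) 1), p.2 ≠ 0 →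
        G p = F (p.1 * p.2 ^ k, p.2) := by
  set K := k.toNat with hKdef
  have hk0 : (0:ℤ) ≤ k := le_trans (Int.natCast_nonneg j) hk
  have hKk : (K:ℤ) = k := Int.toNat_of_nonneg hk0
  have hjK : j ≤ K := by
    have : (j:ℤ) ≤ (K:ℤ) := by rw [hKk]; exact hk
    exact_mod_cast this
  obtain ⟨N, hNc, hNd, hNeq⟩ :
      ∃ N : ℂ × ℂ → EuclideanSpace ℂ (Fin n),
        ContinuousOn N (closedBall 0 1 ×ˢ closedBall 0 (1/2)) ∧
        DifferentiableOn ℂ N (ball 0 1 ×ˢ ball 0 (1/2)) ∧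
        ∀ p : ℂ × ℂ, p.1 ∈ closedBall (0:ℂ) 1 → ‖p.2‖ < 1/2 → p.2 ≠ 0 →
          F (p.1 * p.2^K, p.2) = N p := by
    by_cases hK0 : K = 0
    · have hj0 : j = 0 := le_antisymm (hK0 ▸ hjK) (Nat.zero_le _)
      refine branch0 F h hhc hhd hFc hFz ?_ K
      intro z hz
      obtain ⟨g, hgd, hgeq⟩ := hpole z hz
      exact ⟨g, hgd, fun w hw => by rw [hgeq w hw, hj0, pow_zero, one_smul]⟩
    · exact branch1 F h j hhc hhd hFc hFz hF0 hpole K (Nat.one_le_iff_ne_zero.2 hK0) hjK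
  obtain ⟨G, hGc, hGd, hGeq⟩ := glueG F hFc hFw hFz K N hNc hNd hNeq
  refine ⟨G, hGc, hGd, ?_⟩
  intro p hp hne
  rw [hGeq p hp hne, ← hKk, zpow_natCast]
end
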